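/- arXiv:math/0509023 — 13 statements merged into one kernel-verified Lean document; each statement's English description precedes it below -/
import Mathlib

section
/- Let n ≥ 2 and let a = (a_1, …, a_n) ∈ ℝ^n have components linearly independent over ℚ. Then the multiplier group M(a) is the underlying set of a subgroup of the multiplicative group of nonzero real numbers: every element of M(a) is nonzero, both 1 and −1 belong to M(a), and M(a) is closed under multiplication and under taking multiplicative inverses. -/
open Matrix

/-- The multiplier set of a frequency vector `a`: the set of real numbers `α`
such that some integer matrix `B` of determinant `±1` satisfies `B · a = α • a`. -/
def MultSet {n : ℕ} (a : Fin n → ℝ) : Set ℝ :=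
  {α : ℝ | ∃ B : Matrix (Fin n) (Fin n) ℤ,
    (B.det = 1 ∨ B.det = -1) ∧ ∀ i, α * a i = ∑ j, (B i j : ℝ) * a j}

/-- `a` is `F`-algebraic: for some nonzero `θ`, the numbers `θ * a i` lie in `F`
and form a `ℚ`-basis of `F`. -/
def IsFAlgebraic {n : ℕ} (F : Subfield ℝ) (a : Fin n → ℝ) : Prop :=
  ∃ θ : ℝ, θ ≠ 0 ∧ ∃ bas : Module.Basis (Fin n) ℚ F, ∀ i, (bas i : ℝ) = θ * a i

/-- `MultSet a` is a finite-index subgroup of the unit group of the ring of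
integers of `F`: every multiplier is a unit of `𝓞_F`, and finitely many units
`u i` suffice so that every unit of `𝓞_F` is some `u i` times a multiplier. -/
def MultSetFiniteIndexUnits {n : ℕ} (a : Fin n → ℝ) (F : Subfield ℝ) : Prop :=
  (∀ α ∈ MultSet a, ∃ u : (integralClosure ℤ F)ˣ,
      (((u : integralClosure ℤ F) : F) : ℝ) = α) ∧
  ∃ m : ℕ, ∃ u : Fin m → (integralClosure ℤ F)ˣ,
    ∀ v : (integralClosure ℤ F)ˣ, ∃ i : Fin m, ∃ α ∈ MultSet a,
      (((v : integralClosure ℤ F) : F) : ℝ)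
        = (((u i : integralClosure ℤ F) : F) : ℝ) * α

lemma multSet_ne_zero {n : ℕ} (hn : 2 ≤ n) (a : Fin n → ℝ)
    (ha : LinearIndependent ℚ a) : ∀ α ∈ MultSet a, α ≠ 0 := by
  rintro α ⟨B, hdet, hB⟩ rfl
  have hzero : ∀ i j, B i j = 0 := by
    intro i j
    have h := (Fintype.linearIndependent_iff.mp ha) (fun j => (B i j : ℚ)) ?_ j
    · exact_mod_cast h
    · have := (hB i).symm
      simpa [Rat.smul_def, zero_mul] using this
  have : B = 0 := by ext i j; exact hzero i j
  subst this
  have hnonempty : Nonempty (Fin n) := ⟨⟨0, by omega⟩⟩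
  have : (0 : Matrix (Fin n) (Fin n) ℤ).det = 0 := by haveI := hnonempty; exact Matrix.det_zero
  omega

/-- the multiplier set `M(a)` is (the underlying set of) a
subgroup of the multiplicative group of nonzero reals. -/
theorem multSet_is_subgroup {n : ℕ} (hn : 2 ≤ n) (a : Fin n → ℝ)
    (ha : LinearIndependent ℚ a) :
    (∀ α ∈ MultSet a, α ≠ 0) ∧
    (1 : ℝ) ∈ MultSet a ∧ (-1 : ℝ) ∈ MultSet a ∧
    (∀ α ∈ MultSet a, ∀ β ∈ MultSet a, α * β ∈ MultSet a) ∧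
    (∀ α ∈ MultSet a, α⁻¹ ∈ MultSet a) := by
  refine ⟨multSet_ne_zero hn a ha, ?_, ?_, ?_, ?_⟩
  · exact ⟨1, Or.inl (Matrix.det_one), fun i => by
      simp [Matrix.one_apply, Finset.sum_ite_eq', one_mul]⟩
  · refine ⟨-1, ?_, fun i => ?_⟩
    · rcases Nat.even_or_odd n with h | h
      · left; simp [Matrix.det_neg, h.neg_one_pow]
      · right; simp [Matrix.det_neg, h.neg_one_pow]
    · simp [Matrix.neg_apply, Matrix.one_apply, Finset.sum_ite_eq', ite_mul]
  · rintro α ⟨B, hBdet, hB⟩ β ⟨C, hCdet, hC⟩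
    refine ⟨B * C, ?_, fun i => ?_⟩
    · rw [Matrix.det_mul]
      rcases hBdet with h | h <;> rcases hCdet with h' | h' <;> simp [h, h']
    · have : ∑ j, ((B * C) i j : ℝ) * a j
          = ∑ k, (B i k : ℝ) * (∑ j, (C k j : ℝ) * a j) := by
        simp only [Matrix.mul_apply]
        push_cast
        simp only [Finset.sum_mul]
        rw [Finset.sum_comm]
        congr 1; ext k
        rw [Finset.mul_sum]
        congr 1; ext j; ring
      rw [this]
      have : ∑ k, (B i k : ℝ) * (∑ j, (C k j : ℝ) * a j)
          = β * ∑ k, (B i k : ℝ) * a k := by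
        rw [Finset.mul_sum]
        congr 1; ext k
        rw [← hC k]; ring
      rw [this, ← hB i]; ring
  · rintro α hα
    have hα0 : α ≠ 0 := multSet_ne_zero hn a ha α hα
    obtain ⟨B, hBdet, hB⟩ := hα
    have hu : IsUnit B.det := by
      rcases hBdet with h | h <;> simp [h]
    obtain ⟨U, hU⟩ := (Matrix.isUnit_iff_isUnit_det B).mpr hu
    set B' : Matrix (Fin n) (Fin n) ℤ := ↑U⁻¹ with hB'
    have hmul : B' * B = 1 := by
      rw [hB', ← hU]; exact U.inv_mul
    have hdet' : B'.det = 1 ∨ B'.det = -1 := by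
      have h1 : B'.det * B.det = 1 := by
        rw [← Matrix.det_mul, hmul, Matrix.det_one]
      rcases hBdet with h | h <;> rw [h] at h1 <;> [left; right] <;> omega
    refine ⟨B', hdet', fun i => ?_⟩
    have key : α * (∑ j, (B' i j : ℝ) * a j) = a i := by
      have : α * (∑ j, (B' i j : ℝ) * a j) = ∑ j, (B' i j : ℝ) * (α * a j) := by
        rw [Finset.mul_sum]; congr 1; ext j; ring
      rw [this]
      have : ∑ j, (B' i j : ℝ) * (α * a j)
          = ∑ k, ((B' * B) i k : ℝ) * a k := by
        simp only [Matrix.mul_apply]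
        push_cast
        simp only [Finset.sum_mul]
        rw [Finset.sum_comm]
        congr 1; ext j
        rw [hB j, Finset.mul_sum]
        congr 1; ext k; ring
      rw [this, hmul]
      simp [Matrix.one_apply, Finset.sum_ite_eq', ite_mul]
    field_simp
    linarith [key]
end

section
/- Let n ≥ 2, let a = (a_1, …, a_n) ∈ ℝ^n have components linearly independent over ℚ, and let F be a real algebraic number field of degree n. If a is F-algebraic, then M(a) is a finite-index subgroup of 𝓞_F^×: every element of M(a) is a unit of 𝓞_F, and there exist finitely many units u_1, …, u_m of 𝓞_F such that every unit of 𝓞_F equals u_i·α for some i and some α ∈ M(a). -/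
set_option synthInstance.maxHeartbeats 1000000
set_option maxHeartbeats 1000000


open Matrix

variable {n : ℕ} {F : Subfield ℝ}

/-- uniqueness of integer coefficients w.r.t. a ℚ-basis -/
lemma coeffEq (bas : Module.Basis (Fin n) ℚ F) (m m' : Fin n → ℤ)
    (h : ∑ j, (m j : F) * bas j = ∑ j, (m' j : F) * bas j) : m = m' := by
  have h' : ∑ j, ((m j : ℚ) - (m' j : ℚ)) • (bas j) = 0 := by
    have : ∀ (k : Fin n → ℤ) j, ((k j : ℚ)) • (bas j : F) = (k j : F) * bas j := by
      intro k j
      rw [Rat.smul_def]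
      push_cast
      ring
    simp only [sub_smul, Finset.sum_sub_distrib, this, h, sub_self]
  have h2 := (Fintype.linearIndependent_iff.mp bas.linearIndependent) _ h'
  funext j
  have := h2 j
  have : (m j : ℚ) = (m' j : ℚ) := by linarith [sub_eq_zero.mp this]
  exact_mod_cast this

lemma sumMulSum (bas : Module.Basis (Fin n) ℚ F) (C B : Matrix (Fin n) (Fin n) ℤ) (i : Fin n) :
    ∑ j, (C i j : F) * (∑ k, (B j k : F) * bas k) = ∑ k, (((C * B) i k : ℤ) : F) * bas k := by
  simp only [Finset.mul_sum, Matrix.mul_apply]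
  rw [Finset.sum_comm]
  congr 1; funext k
  push_cast
  rw [Finset.sum_mul]
  congr 1; funext j
  ring

/-- representation of a lattice element -/
lemma latRepr (bas : Module.Basis (Fin n) ℚ F) {y : F}
    (hy : y ∈ Submodule.span ℤ (Set.range ⇑bas)) :
    ∃ m : Fin n → ℤ, y = ∑ j, (m j : F) * bas j := by
  obtain ⟨m, hm⟩ := (Submodule.mem_span_range_iff_exists_fun ℤ).mp hy
  exact ⟨m, by rw [← hm]; congr 1; funext j; rw [← zsmul_eq_mul]⟩

lemma latMem (bas : Module.Basis (Fin n) ℚ F) (m : Fin n → ℤ) :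
    ∑ j, (m j : F) * bas j ∈ Submodule.span ℤ (Set.range ⇑bas) := by
  refine Submodule.sum_mem _ fun j _ => ?_
  rw [← zsmul_eq_mul]
  exact Submodule.smul_mem _ _ (Submodule.subset_span ⟨j, rfl⟩)

lemma memMultsetOfStab {θ : ℝ} {a : Fin n → ℝ} (bas : Module.Basis (Fin n) ℚ F)
    (hbas : ∀ i, (bas i : ℝ) = θ * a i) (hθ : θ ≠ 0)
    (x : F) (hx0 : x ≠ 0)
    (hB : ∀ i, x * bas i ∈ Submodule.span ℤ (Set.range ⇑bas))
    (hC : ∀ i, x⁻¹ * bas i ∈ Submodule.span ℤ (Set.range ⇑bas)) :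
    ((x : ℝ)) ∈ MultSet a := by
  choose B hB' using fun i => latRepr bas (hB i)
  choose C hC' using fun i => latRepr bas (hC i)
  have oneRepr : ∀ i : Fin n, (bas i : F)
      = ∑ k, (((1 : Matrix (Fin n) (Fin n) ℤ) i k : ℤ) : F) * bas k := by
    intro i
    simp [Matrix.one_apply, apply_ite (fun z : ℤ => (z : F))]
  set Bm : Matrix (Fin n) (Fin n) ℤ := Matrix.of B with hBm
  set Cm : Matrix (Fin n) (Fin n) ℤ := Matrix.of C with hCm
  have hB2 : ∀ i, x * bas i = ∑ j, ((Bm i j : ℤ) : F) * bas j := hB'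
  have hC2 : ∀ i, x⁻¹ * bas i = ∑ j, ((Cm i j : ℤ) : F) * bas j := hC'
  have hCB : Cm * Bm = 1 := by
    have h1 : ∀ i, (bas i : F) = ∑ k, (((Cm * Bm) i k : ℤ) : F) * bas k := by
      intro i
      rw [← sumMulSum]
      calc (bas i : F) = x * (x⁻¹ * bas i) := by field_simp
        _ = x * ∑ j, (Cm i j : F) * bas j := by rw [← hC2 i]
        _ = ∑ j, (Cm i j : F) * (x * bas j) := by
            rw [Finset.mul_sum]; congr 1; funext j; ring
        _ = ∑ j, (Cm i j : F) * (∑ k, (Bm j k : F) * bas k) := by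
            congr 1; funext j; rw [← hB2 j]
    ext i k
    exact congrFun (coeffEq bas (fun k => (Cm * Bm) i k)
      (fun k => (1 : Matrix (Fin n) (Fin n) ℤ) i k) (by rw [← h1 i, ← oneRepr i])) k
  have hBC : Bm * Cm = 1 := by
    have h1 : ∀ i, (bas i : F) = ∑ k, (((Bm * Cm) i k : ℤ) : F) * bas k := by
      intro i
      rw [← sumMulSum]
      calc (bas i : F) = x⁻¹ * (x * bas i) := by field_simp
        _ = x⁻¹ * ∑ j, (Bm i j : F) * bas j := by rw [← hB2 i]
        _ = ∑ j, (Bm i j : F) * (x⁻¹ * bas j) := by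
            rw [Finset.mul_sum]; congr 1; funext j; ring
        _ = ∑ j, (Bm i j : F) * (∑ k, (Cm j k : F) * bas k) := by
            congr 1; funext j; rw [← hC2 j]
    ext i k
    exact congrFun (coeffEq bas (fun k => (Bm * Cm) i k)
      (fun k => (1 : Matrix (Fin n) (Fin n) ℤ) i k) (by rw [← h1 i, ← oneRepr i])) k
  refine ⟨Bm, ?_, ?_⟩
  · have : Bm.det * Cm.det = 1 := by rw [← Matrix.det_mul, hBC, Matrix.det_one]
    exact Int.isUnit_iff.mp (IsUnit.of_mul_eq_one _ this)
  · intro i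
    have hcoe : ((x * bas i : F) : ℝ) = ((∑ j, (Bm i j : F) * bas j : F) : ℝ) := by
      rw [← hB2 i]
    push_cast at hcoe
    simp only [hbas] at hcoe
    have : θ * ((x : ℝ) * a i) = θ * (∑ j, (Bm i j : ℝ) * a j) := by
      rw [Finset.mul_sum]
      calc θ * ((x:ℝ) * a i) = (x:ℝ) * (θ * a i) := by ring
        _ = ∑ j, (Bm i j : ℝ) * (θ * a j) := hcoe
        _ = ∑ j, θ * ((Bm i j : ℝ) * a j) := by congr 1; funext j; ring
    exact mul_left_cancel₀ hθ this

lemma multsetToStab {θ : ℝ} {a : Fin n → ℝ} (hn : 2 ≤ n) (bas : Module.Basis (Fin n) ℚ F)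
    (hbas : ∀ i, (bas i : ℝ) = θ * a i) (hθ : θ ≠ 0) (ha : LinearIndependent ℚ a)
    {α : ℝ} (hα : α ∈ MultSet a) :
    ∃ x : F, (x : ℝ) = α ∧ x ≠ 0 ∧
      (∀ i, x * bas i ∈ Submodule.span ℤ (Set.range ⇑bas)) ∧
      (∀ i, x⁻¹ * bas i ∈ Submodule.span ℤ (Set.range ⇑bas)) := by
  obtain ⟨B, hdet, hEq⟩ := hα
  have hne : Nonempty (Fin n) := ⟨⟨0, by omega⟩⟩
  obtain ⟨i₀⟩ := hne
  -- α ≠ 0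
  have hα0 : α ≠ 0 := by
    intro h0
    have hz : ∀ i j, B i j = 0 := by
      intro i j
      have h2 := hEq i
      rw [h0, zero_mul] at h2
      have h1 : ∑ k, ((B i k : ℚ)) • a k = 0 := by
        calc ∑ k, ((B i k : ℚ)) • a k = ∑ k, (B i k : ℝ) * a k := by
              simp [Rat.smul_def]
          _ = 0 := h2.symm
      have := (Fintype.linearIndependent_iff.mp ha) _ h1 j
      exact_mod_cast this
    have : B = 0 := by ext i j; exact hz i j
    rw [this, (show (0 : Matrix (Fin n) (Fin n) ℤ).det = 0 by haveI : Nonempty (Fin n) := ⟨i₀⟩; exact Matrix.det_zero)] at hdet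
    rcases hdet with h | h <;> norm_num at h
  have hai : ∀ i, (bas i : ℝ) ≠ 0 := by
    intro i
    rw [hbas i]
    exact mul_ne_zero hθ (ha.ne_zero i ∘ (by intro h; exact h))
  -- define x
  set x : F := (∑ j, (B i₀ j : F) * bas j) * (bas i₀)⁻¹ with hxdef
  have hxα : (x : ℝ) = α := by
    have : ((x : F) : ℝ) = (∑ j, (B i₀ j : ℝ) * (bas j : ℝ)) * ((bas i₀ : ℝ))⁻¹ := by
      rw [hxdef]
      push_cast
      ring
    rw [this]
    have : ∑ j, (B i₀ j : ℝ) * (bas j : ℝ) = α * (bas i₀ : ℝ) := by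
      simp only [hbas]
      rw [hbas i₀] at *
      calc ∑ j, (B i₀ j : ℝ) * (θ * a j) = θ * ∑ j, (B i₀ j : ℝ) * a j := by
            rw [Finset.mul_sum]; congr 1; funext j; ring
        _ = θ * (α * a i₀) := by rw [← hEq i₀]
        _ = α * (θ * a i₀) := by ring
    rw [this, mul_inv_cancel_right₀ (hai i₀)]
  have hx0 : x ≠ 0 := by
    intro h
    rw [h] at hxα
    exact hα0 (by exact_mod_cast hxα.symm)
  -- key multiplication identity
  have hmul : ∀ i, x * bas i = ∑ j, (B i j : F) * bas j := by
    intro i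
    apply Subtype.val_injective
    push_cast
    rw [hxα]
    simp only [hbas]
    calc α * (θ * a i) = θ * (α * a i) := by ring
      _ = θ * ∑ j, (B i j : ℝ) * a j := by rw [hEq i]
      _ = ∑ j, (B i j : ℝ) * (θ * a j) := by
          rw [Finset.mul_sum]; congr 1; funext j; ring
  -- inverse matrix
  have hdet2 : B.det * B.det = 1 := by
    rcases hdet with h | h <;> rw [h] <;> norm_num
  set C : Matrix (Fin n) (Fin n) ℤ := B.det • B.adjugate with hCdef
  have hCB : C * B = 1 := by
    rw [hCdef, Matrix.smul_mul, Matrix.adjugate_mul, smul_smul, hdet2, one_smul]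
  have hinv : ∀ i, x⁻¹ * bas i = ∑ j, (C i j : F) * bas j := by
    intro i
    have : x * (∑ j, (C i j : F) * bas j) = bas i := by
      calc x * (∑ j, (C i j : F) * bas j) = ∑ j, (C i j : F) * (x * bas j) := by
            rw [Finset.mul_sum]; congr 1; funext j; ring
        _ = ∑ j, (C i j : F) * (∑ k, (B j k : F) * bas k) := by
            congr 1; funext j; rw [hmul j]
        _ = ∑ k, (((C * B) i k : ℤ) : F) * bas k := sumMulSum bas C B i
        _ = bas i := by
            rw [hCB]
            simp [Matrix.one_apply, apply_ite (fun z : ℤ => (z : F))]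
    rw [← this]
    field_simp
  exact ⟨x, hxα, hx0, fun i => (hmul i) ▸ latMem bas (B i),
    fun i => (hinv i) ▸ latMem bas (C i)⟩

lemma stabIntegral (bas : Module.Basis (Fin n) ℚ F) (hn : 0 < n) (x : F)
    (h : ∀ i, x * bas i ∈ Submodule.span ℤ (Set.range ⇑bas)) : IsIntegral ℤ x := by
  refine isIntegral_of_smul_mem_submodule (Submodule.span ℤ (Set.range ⇑bas)) ?_ ?_ x ?_
  · intro hbot
    have : (bas ⟨0, hn⟩ : F) ∈ Submodule.span ℤ (Set.range ⇑bas) :=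
      Submodule.subset_span ⟨_, rfl⟩
    rw [hbot] at this
    exact bas.ne_zero ⟨0, hn⟩ (by simpa using this)
  · exact Submodule.fg_span (Set.finite_range _)
  · intro y hy
    induction hy using Submodule.span_induction with
    | mem y hy => obtain ⟨i, rfl⟩ := hy; simpa [smul_eq_mul] using h i
    | zero => simp
    | add y z _ _ hy hz => rw [smul_add]; exact add_mem hy hz
    | smul c y _ hy =>
        rw [smul_comm]
        exact Submodule.smul_mem _ c hy

lemma unitOfStab (bas : Module.Basis (Fin n) ℚ F) (hn : 0 < n) (x : F) (hx0 : x ≠ 0)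
    (hB : ∀ i, x * bas i ∈ Submodule.span ℤ (Set.range ⇑bas))
    (hC : ∀ i, x⁻¹ * bas i ∈ Submodule.span ℤ (Set.range ⇑bas)) :
    ∃ u : (integralClosure ℤ F)ˣ, ((u : integralClosure ℤ F) : F) = x := by
  have h1 := stabIntegral bas hn x hB
  have h2 := stabIntegral bas hn x⁻¹ hC
  exact ⟨⟨⟨x, h1⟩, ⟨x⁻¹, h2⟩, Subtype.ext (mul_inv_cancel₀ hx0),
    Subtype.ext (inv_mul_cancel₀ hx0)⟩, rfl⟩

lemma existsDenom (bas : Module.Basis (Fin n) ℚ F) (y : F) :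
    ∃ c : ℤ, c ≠ 0 ∧ c • y ∈ Submodule.span ℤ (Set.range ⇑bas) := by
  have hy : y ∈ Submodule.span ℚ (Set.range ⇑bas) := by rw [bas.span_eq]; trivial
  induction hy using Submodule.span_induction with
  | mem y hy =>
      exact ⟨1, one_ne_zero, by simpa using Submodule.subset_span hy⟩
  | zero => exact ⟨1, one_ne_zero, by simp⟩
  | add y z _ _ hy hz =>
      obtain ⟨cy, hcy0, hcy⟩ := hy
      obtain ⟨cz, hcz0, hcz⟩ := hz
      refine ⟨cy * cz, mul_ne_zero hcy0 hcz0, ?_⟩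
      rw [smul_add, show ((cy*cz : ℤ)) • y = cz • (cy • y) by rw [mul_comm, mul_smul],
        mul_smul]
      exact add_mem (Submodule.smul_mem _ _ hcy) (Submodule.smul_mem _ _ hcz)
  | smul q y _ hy =>
      obtain ⟨c, hc0, hc⟩ := hy
      refine ⟨(q.den : ℤ) * c, mul_ne_zero (Int.natCast_ne_zero.mpr q.den_nz) hc0, ?_⟩
      have key : ((q.den : ℤ) * c) • (q • y) = (q.num * c) • y := by
        rw [← Int.cast_smul_eq_zsmul ℚ ((q.den : ℤ) * c), smul_smul,
          ← Int.cast_smul_eq_zsmul ℚ (q.num * c)]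
        congr 1
        push_cast
        have : (q.den : ℚ) * q = (q.num : ℚ) := by
          rw [mul_comm]; exact Rat.mul_den_eq_num q
        rw [mul_assoc, mul_comm (c:ℚ) q, ← mul_assoc, this]
      rw [key, mul_smul]
      exact Submodule.smul_mem _ _ hc

lemma existsGlobalDenom (bas : Module.Basis (Fin n) ℚ F) :
    ∃ c : ℤ, c ≠ 0 ∧ ∀ z : integralClosure ℤ F,
      c • (z : F) ∈ Submodule.span ℤ (Set.range ⇑bas) := by
  haveI : FiniteDimensional ℚ F := Module.Finite.of_basis bas
  haveI : Module.Finite ℤ (integralClosure ℤ F) := IsIntegralClosure.finite ℤ ℚ F _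
  obtain ⟨s, hs⟩ := (Module.Finite.fg_top : (⊤ : Submodule ℤ (integralClosure ℤ F)).FG)
  choose cf hcf0 hcf using fun g : integralClosure ℤ F => existsDenom bas (g : F)
  refine ⟨∏ g ∈ s, cf g, Finset.prod_ne_zero_iff.mpr (fun g _ => hcf0 g), ?_⟩
  intro z
  set c := ∏ g ∈ s, cf g with hcdef
  let f : integralClosure ℤ F →ₗ[ℤ] F :=
    c • (Subalgebra.toSubmodule (integralClosure ℤ F)).subtype
  have hz : z ∈ Submodule.comap f (Submodule.span ℤ (Set.range ⇑bas)) := by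
    have hz' : z ∈ Submodule.span ℤ (s : Set (integralClosure ℤ F)) := by
      rw [hs]; trivial
    refine Submodule.span_le.mpr ?_ hz'
    intro g hg
    simp only [Submodule.mem_comap, f, LinearMap.smul_apply, Submodule.subtype_apply]
    obtain ⟨e, he⟩ := Finset.dvd_prod_of_mem cf hg
    rw [hcdef, he, mul_comm, mul_smul]
    exact Submodule.smul_mem _ _ (hcf g)
  exact hz

lemma keyN (bas : Module.Basis (Fin n) ℚ F) :
    ∃ N : ℤ, N ≠ 0 ∧ ∀ (z : integralClosure ℤ F) (i : Fin n),
      ((N : ℤ) : F) * (z : F) * bas i ∈ Submodule.span ℤ (Set.range ⇑bas) := by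
  haveI : FiniteDimensional ℚ F := Module.Finite.of_basis bas
  obtain ⟨c, hc0, hc⟩ := existsGlobalDenom bas
  obtain ⟨d, hd0, hd⟩ := exists_integral_multiples ℤ ℚ (Finset.image ⇑bas Finset.univ)
  refine ⟨c * d, mul_ne_zero hc0 hd0, ?_⟩
  intro z i
  have hdi : IsIntegral ℤ (d • (bas i : F)) :=
    hd _ (Finset.mem_image_of_mem _ (Finset.mem_univ i))
  set w : integralClosure ℤ F := z * ⟨d • (bas i : F), hdi⟩ with hwdef
  have hw : ((c * d : ℤ) : F) * (z : F) * bas i = c • (w : F) := by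
    have h1 : (w : F) = (z : F) * (d • (bas i : F)) := rfl
    rw [zsmul_eq_mul, h1, zsmul_eq_mul]
    push_cast
    ring
  rw [hw]
  exact hc w

/-- if `a` is `F`-algebraic then `M(a)` is a finite-index
subgroup of the unit group of the ring of integers of `F`. -/
theorem falgebraic_imp_finiteIndex {n : ℕ} (hn : 2 ≤ n) (a : Fin n → ℝ)
    (ha : LinearIndependent ℚ a) (F : Subfield ℝ)
    (hF : Module.finrank ℚ F = n) (halg : IsFAlgebraic F a) :
    MultSetFiniteIndexUnits a F := by
  classical
  obtain ⟨θ, hθ, bas, hbas⟩ := halg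
  have hn0 : 0 < n := by omega
  constructor
  · intro α hα
    obtain ⟨x, hxα, hx0, hBmem, hCmem⟩ := multsetToStab hn bas hbas hθ ha hα
    obtain ⟨u, hu⟩ := unitOfStab bas hn0 x hx0 hBmem hCmem
    exact ⟨u, by rw [hu, hxα]⟩
  · haveI : FiniteDimensional ℚ F := Module.Finite.of_basis bas
    haveI : Algebra.IsAlgebraic ℚ F := Algebra.IsAlgebraic.of_finite ℚ F
    haveI : Module.Finite ℤ (integralClosure ℤ F) := IsIntegralClosure.finite ℤ ℚ F _
    haveI : Module.Free ℤ (integralClosure ℤ F) := IsIntegralClosure.module_free ℤ ℚ F _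
    obtain ⟨N, hN0, hN⟩ := keyN bas
    set R := integralClosure ℤ F with hRdef
    set I : Ideal R := Ideal.span {(N : R)} with hIdef
    have hNR : ((N : R) : F) = (N : F) := by push_cast; rfl
    have hI : I ≠ ⊥ := by
      rw [hIdef, Ne, Ideal.span_singleton_eq_bot]
      intro h
      have h2 : ((N : R) : F) = 0 := by rw [h]; rfl
      rw [hNR] at h2
      exact hN0 (by exact_mod_cast h2)
    haveI : Fintype (R ⧸ I) := @Fintype.ofFinite _ (Ideal.finiteQuotientOfFreeOfNeBot I hI)
    set m := Fintype.card (R ⧸ I) with hmdef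
    set e : Fin m ≃ (R ⧸ I) := (Fintype.equivFin (R ⧸ I)).symm with hedef
    set u : Fin m → Rˣ := fun i =>
      if h : ∃ v : Rˣ, Ideal.Quotient.mk I (v : R) = e i then h.choose else 1 with hudef
    refine ⟨m, u, ?_⟩
    intro v
    set i := e.symm (Ideal.Quotient.mk I (v : R)) with hidef
    have hex : ∃ w : Rˣ, Ideal.Quotient.mk I (w : R) = e i := ⟨v, by rw [hidef]; simp⟩
    have hui : Ideal.Quotient.mk I ((u i : R)) = Ideal.Quotient.mk I (v : R) := by
      rw [hudef]
      simp only [dif_pos hex]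
      rw [hex.choose_spec, hidef]
      simp
    set w : Rˣ := (u i)⁻¹ * v with hwdef
    have hsub1 : (v : R) - (u i : R) ∈ I := Ideal.Quotient.eq.mp hui.symm
    have hsub2 : (u i : R) - (v : R) ∈ I := Ideal.Quotient.eq.mp hui
    have hw1 : (w : R) - 1 ∈ I := by
      have key : ((u i)⁻¹ : Rˣ).1 * ((v : R) - (u i : R)) = (w : R) - 1 := by
        rw [mul_sub, hwdef, Units.val_mul, Units.inv_mul]
      exact key ▸ I.mul_mem_left _ hsub1
    have hw2 : ((w⁻¹ : Rˣ) : R) - 1 ∈ I := by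
      have hwi : w⁻¹ = v⁻¹ * (u i) := by rw [hwdef, _root_.mul_inv_rev, inv_inv]
      have key : ((v⁻¹ : Rˣ) : R) * ((u i : R) - (v : R)) = ((w⁻¹ : Rˣ) : R) - 1 := by
        rw [mul_sub, hwi, Units.val_mul, Units.inv_mul]
      exact key ▸ I.mul_mem_left _ hsub2
    obtain ⟨t1, ht1⟩ := Ideal.mem_span_singleton'.mp hw1
    obtain ⟨t2, ht2⟩ := Ideal.mem_span_singleton'.mp hw2
    -- pass to F
    set x : F := ((w : R) : F) with hxdef
    have hcast1 := congrArg (fun z : R => (z : F)) ht1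
    push_cast at hcast1
    have hcast2 := congrArg (fun z : R => (z : F)) ht2
    push_cast at hcast2
    have hx1 : x = 1 + (N : F) * (t1 : F) := by
      rw [hxdef]
      linear_combination -hcast1 + ((t1 : F) : F) * hNR
    have hmulinv : x * (((w⁻¹ : Rˣ) : R) : F) = 1 := by
      have h3 := congrArg (fun z : R => (z : F)) (Units.mul_inv w)
      simp only [MulMemClass.coe_mul, OneMemClass.coe_one] at h3
      exact h3
    have hx0 : x ≠ 0 := by
      intro h0
      rw [h0, zero_mul] at hmulinv
      exact zero_ne_one hmulinv
    have hxi : (x⁻¹ : F) = (((w⁻¹ : Rˣ) : R) : F) := inv_eq_of_mul_eq_one_right hmulinv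
    have hx2 : (x⁻¹ : F) = 1 + (N : F) * (t2 : F) := by
      rw [hxi]
      linear_combination -hcast2 + ((t2 : F) : F) * hNR
    -- lattice stability
    have hBmem : ∀ j, x * bas j ∈ Submodule.span ℤ (Set.range ⇑bas) := by
      intro j
      rw [hx1, add_mul, one_mul, mul_assoc]
      refine add_mem (Submodule.subset_span ⟨j, rfl⟩) ?_
      have := hN t1 j
      rwa [mul_assoc] at this
    have hCmem : ∀ j, x⁻¹ * bas j ∈ Submodule.span ℤ (Set.range ⇑bas) := by
      intro j
      rw [hx2, add_mul, one_mul, mul_assoc]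
      refine add_mem (Submodule.subset_span ⟨j, rfl⟩) ?_
      have := hN t2 j
      rwa [mul_assoc] at this
    have hmem : ((x : F) : ℝ) ∈ MultSet a := memMultsetOfStab bas hbas hθ x hx0 hBmem hCmem
    refine ⟨i, ((x : F) : ℝ), hmem, ?_⟩
    -- v = u i * w
    have hv : (v : R) = (u i : R) * (w : R) := by
      rw [hwdef, ← Units.val_mul, mul_inv_cancel_left]
    have : ((v : R) : F) = ((u i : R) : F) * x := by
      rw [hv, hxdef]; push_cast; ring
    rw [this]
    push_cast
    ring
end

section
/- Let n ≥ 2 and let a = (a_1, …, a_n) ∈ ℝ^n have components linearly independent over ℚ. If M(a) = {1, −1}, then a is transcendental, i.e., a is not F-algebraic for any real algebraic number field F of degree n. -/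
set_option maxSynthPendingDepth 2
set_option synthInstance.maxHeartbeats 400000
set_option maxHeartbeats 1600000

open Matrix

namespace MultSetAux

open NumberField

lemma aux_exists_unit (K : Type*) [Field K] [NumberField K]
    (h : 0 < Units.rank K) : ∃ ε : (𝓞 K)ˣ, ¬ IsOfFinOrder ε := by
  refine ⟨Units.fundSystem K ⟨0, h⟩, fun hfin => ?_⟩
  have hmem : Units.fundSystem K ⟨0, h⟩ ∈ Units.torsion K :=
    (CommGroup.mem_torsion _).mpr hfin
  have h1 : (QuotientGroup.mk (Units.fundSystem K ⟨0, h⟩) : (𝓞 K)ˣ ⧸ Units.torsion K) = 1 :=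
    (QuotientGroup.eq_one_iff _).mpr hmem
  have h2 := Units.fundSystem_mk K ⟨0, h⟩
  rw [h1] at h2
  exact Units.basisModTorsion K |>.ne_zero ⟨0, h⟩ (by rw [← h2]; rfl)

section
open scoped Classical

lemma aux_rank_pos (F : Subfield ℝ) [NumberField F] (h : 2 ≤ Module.finrank ℚ F) :
    0 < Units.rank F := by
  have hre : 0 < InfinitePlace.nrRealPlaces F := by
    rw [InfinitePlace.nrRealPlaces, Fintype.card_pos_iff]
    refine ⟨⟨InfinitePlace.mk (Complex.ofRealHom.comp F.subtype), ?_⟩⟩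
    rw [InfinitePlace.isReal_mk_iff, ComplexEmbedding.isReal_iff]
    ext x
    simp [ComplexEmbedding.conjugate_coe_eq]
  have hcard := InfinitePlace.card_eq_nrRealPlaces_add_nrComplexPlaces F
  have hsum := InfinitePlace.card_add_two_mul_card_eq_rank F
  rw [Units.rank]
  omega

end

lemma rat_den_clear (q : ℚ) (m : ℕ) (h : q.den ∣ m) :
    ∃ z : ℤ, (z : ℚ) = (m : ℚ) * q := by
  obtain ⟨c, hc⟩ := h
  refine ⟨(c : ℤ) * q.num, ?_⟩
  have hm : (m : ℚ) = (q.den : ℚ) * (c : ℚ) := by exact_mod_cast hc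
  have hden : (q.den : ℚ) * q = q.num := by
    rw [mul_comm]; exact_mod_cast q.mul_den_eq_num
  rw [hm, mul_comm ((q.den : ℚ)) ((c : ℚ)), mul_assoc, hden]
  push_cast; ring

variable {K : Type*} [Field K] [NumberField K] {n : ℕ}

lemma mem_span_of_int_repr (bas : Module.Basis (Fin n) ℚ K) (y : K)
    (h : ∀ j, ∃ z : ℤ, (z : ℚ) = bas.repr y j) :
    y ∈ Submodule.span ℤ (Set.range ⇑bas) := by
  choose z hz using h
  have hy : y = ∑ j, z j • bas j := by
    conv_lhs => rw [← bas.sum_repr y]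
    refine Finset.sum_congr rfl fun j _ => ?_
    rw [← hz j, Int.cast_smul_eq_zsmul]
  rw [hy]
  exact Submodule.sum_mem _ fun j _ =>
    Submodule.smul_mem _ _ (Submodule.subset_span ⟨j, rfl⟩)

lemma int_repr_of_mem_span (bas : Module.Basis (Fin n) ℚ K) (y : K)
    (h : y ∈ Submodule.span ℤ (Set.range ⇑bas)) :
    ∀ j, ∃ z : ℤ, (z : ℚ) = bas.repr y j := by
  refine Submodule.span_induction ?_ ?_ ?_ ?_ h
  · rintro _ ⟨i, rfl⟩ j
    rcases eq_or_ne j i with rfl | hne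
    · exact ⟨1, by simp⟩
    · exact ⟨0, by simp [Module.Basis.repr_self, Finsupp.single_apply, hne.symm]⟩
  · intro j; exact ⟨0, by simp⟩
  · intro x y _ _ hx hy j
    obtain ⟨zx, hzx⟩ := hx j
    obtain ⟨zy, hzy⟩ := hy j
    exact ⟨zx + zy, by rw [map_add]; push_cast [hzx, hzy]; simp⟩
  · intro c x _ hx j
    obtain ⟨zx, hzx⟩ := hx j
    have hr : bas.repr (c • x) = c • bas.repr x := map_zsmul bas.repr c x
    refine ⟨c * zx, ?_⟩
    rw [hr]
    simp only [Finsupp.smul_apply, zsmul_eq_mul]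
    push_cast [← hzx]
    ring

lemma exists_N (bas : Module.Basis (Fin n) ℚ K) :
    ∃ N : ℕ, 0 < N ∧ ∀ (x : 𝓞 K) (i : Fin n),
      (N : K) * (algebraMap (𝓞 K) K x) * bas i ∈ Submodule.span ℤ (Set.range ⇑bas) := by
  obtain ⟨m, g, hg⟩ := Module.Finite.exists_fin (R := ℤ) (M := 𝓞 K)
  set d : Fin m → Fin n → Fin n → ℕ := fun k i j =>
    (bas.repr ((algebraMap (𝓞 K) K (g k)) * bas i) j).den with hd
  set N : ℕ := ∏ k, ∏ i, ∏ j, d k i j with hN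
  have hNpos : 0 < N := by
    refine Finset.prod_pos fun k _ => Finset.prod_pos fun i _ => Finset.prod_pos fun j _ => ?_
    exact (bas.repr _ j).pos
  refine ⟨N, hNpos, ?_⟩
  have hgen : ∀ (k : Fin m) (i : Fin n), (N : K) * (algebraMap (𝓞 K) K (g k)) * bas i ∈
      Submodule.span ℤ (Set.range ⇑bas) := by
    intro k i
    have key : ∀ j, ∃ z : ℤ,
        (z : ℚ) = (N : ℚ) * bas.repr ((algebraMap (𝓞 K) K (g k)) * bas i) j := by
      intro j
      refine rat_den_clear _ _ ?_
      calc d k i j ∣ ∏ j', d k i j' := Finset.dvd_prod_of_mem _ (Finset.mem_univ j)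
        _ ∣ ∏ i', ∏ j', d k i' j' := Finset.dvd_prod_of_mem _ (Finset.mem_univ i)
        _ ∣ N := Finset.dvd_prod_of_mem _ (Finset.mem_univ k)
    refine mem_span_of_int_repr bas _ fun j => ?_
    obtain ⟨z, hz⟩ := key j
    refine ⟨z, ?_⟩
    rw [hz]
    have hsm : (N : K) * (algebraMap (𝓞 K) K (g k)) * bas i
        = (N : ℚ) • ((algebraMap (𝓞 K) K (g k)) * bas i) := by
      rw [Rat.smul_def]
      push_cast
      ring
    rw [hsm, _root_.map_smul]
    simp [Rat.smul_def]
  intro x i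
  have hx : x ∈ Submodule.span ℤ (Set.range g) := by rw [hg]; trivial
  induction hx using Submodule.span_induction with
  | mem y hy => obtain ⟨k, rfl⟩ := hy; exact hgen k i
  | zero => simpa using Submodule.zero_mem _
  | add y z _ _ hy hz =>
      have h : (N : K) * (algebraMap (𝓞 K) K (y + z)) * bas i
          = (N : K) * (algebraMap (𝓞 K) K y) * bas i
            + (N : K) * (algebraMap (𝓞 K) K z) * bas i := by
        rw [map_add]; ring
      rw [h]; exact Submodule.add_mem _ hy hz
  | smul c y _ hy =>
      have h : (N : K) * (algebraMap (𝓞 K) K (c • y)) * bas i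
          = c • ((N : K) * (algebraMap (𝓞 K) K y) * bas i) := by
        rw [map_zsmul]
        simp only [zsmul_eq_mul]
        push_cast
        ring
      rw [h]; exact Submodule.smul_mem _ _ hy

end MultSetAux

open MultSetAux NumberField in
/-- if `M(a) = {1, -1}` then `a` is transcendental, i.e. not
`F`-algebraic for any real algebraic number field `F` of degree `n`. -/
theorem multSet_pm_one_imp_transcendental {n : ℕ} (hn : 2 ≤ n) (a : Fin n → ℝ)
    (ha : LinearIndependent ℚ a) (hM : MultSet a = {1, -1}) :
    ∀ F : Subfield ℝ, Module.finrank ℚ F = n → ¬ IsFAlgebraic F a := by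
  rintro F hF ⟨θ, hθ, bas, hbas⟩
  haveI : FiniteDimensional ℚ F := Module.finite_of_finrank_pos (by omega)
  haveI : NumberField F := ⟨⟩
  obtain ⟨ε, hε⟩ := aux_exists_unit F (aux_rank_pos F (by omega))
  obtain ⟨N, hNpos, hNmem⟩ := exists_N bas
  set I : Ideal (𝓞 F) := Ideal.span {(N : 𝓞 F)} with hI
  haveI : Fintype ((𝓞 F) ⧸ I) := @Fintype.ofFinite _ (Ideal.finiteQuotientOfFreeOfNeBot _ (by
    rw [hI, Ne, Ideal.span_singleton_eq_bot]; exact Nat.cast_ne_zero.mpr hNpos.ne'))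
  set f : (𝓞 F)ˣ →* ((𝓞 F) ⧸ I)ˣ := Units.map (Ideal.Quotient.mk I).toMonoidHom with hf
  set t : ℕ := orderOf (f ε) with ht
  have htpos : 0 < t := orderOf_pos (f ε)
  set u : (𝓞 F)ˣ := ε ^ t with hu
  have hmod : ∀ w : (𝓞 F)ˣ, f w = 1 → ∃ x : 𝓞 F, (w : 𝓞 F) = 1 + N * x := by
    intro w hw
    have h1 : Ideal.Quotient.mk I (w : 𝓞 F) = Ideal.Quotient.mk I 1 := by
      have h2 := congrArg (Units.val) hw
      simpa [hf] using h2
    rw [Ideal.Quotient.eq, hI, Ideal.mem_span_singleton] at h1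
    obtain ⟨x, hx⟩ := h1
    exact ⟨x, by linear_combination hx⟩
  have hfu : f u = 1 := by rw [hu, map_pow, ht, pow_orderOf_eq_one]
  have hfu' : f u⁻¹ = 1 := by rw [map_inv, hfu, inv_one]
  set L : Submodule ℤ F := Submodule.span ℤ (Set.range ⇑bas) with hL
  have hlat : ∀ w : (𝓞 F)ˣ, f w = 1 → ∀ i,
      (algebraMap (𝓞 F) F (w : 𝓞 F)) * bas i ∈ L := by
    intro w hw i
    obtain ⟨x, hx⟩ := hmod w hw
    have h3 : (algebraMap (𝓞 F) F (w : 𝓞 F)) * bas i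
        = bas i + (N : F) * (algebraMap (𝓞 F) F x) * bas i := by
      rw [hx, _root_.map_add, _root_.map_one, _root_.map_mul, map_natCast]; ring
    rw [h3]
    exact Submodule.add_mem _ (Submodule.subset_span ⟨i, rfl⟩) (hNmem x i)
  have hBu : ∀ i j, ∃ z : ℤ,
      (z : ℚ) = bas.repr ((algebraMap (𝓞 F) F (u : 𝓞 F)) * bas i) j :=
    fun i j => int_repr_of_mem_span bas _ (hlat u hfu i) j
  have hBv : ∀ i j, ∃ z : ℤ,
      (z : ℚ) = bas.repr ((algebraMap (𝓞 F) F ((u⁻¹ : (𝓞 F)ˣ) : 𝓞 F)) * bas i) j :=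
    fun i j => int_repr_of_mem_span bas _ (hlat u⁻¹ hfu' i) j
  choose B hB using hBu
  choose C hC using hBv
  set xu : F := algebraMap (𝓞 F) F (u : 𝓞 F) with hxu
  set xv : F := algebraMap (𝓞 F) F ((u⁻¹ : (𝓞 F)ˣ) : 𝓞 F) with hxv
  have hxuv : xu * xv = 1 := by
    rw [hxu, hxv, ← _root_.map_mul, ← Units.val_mul, mul_inv_cancel, Units.val_one,
      _root_.map_one]
  have hmatu : LinearMap.toMatrix bas bas (LinearMap.mulLeft ℚ xu)
      = ((Matrix.of B).map (Int.cast : ℤ → ℚ))ᵀ := by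
    ext i j
    rw [LinearMap.toMatrix_apply, LinearMap.mulLeft_apply]
    exact (hB j i).symm
  have hmatv : LinearMap.toMatrix bas bas (LinearMap.mulLeft ℚ xv)
      = ((Matrix.of C).map (Int.cast : ℤ → ℚ))ᵀ := by
    ext i j
    rw [LinearMap.toMatrix_apply, LinearMap.mulLeft_apply]
    exact (hC j i).symm
  have hdet : (Matrix.of B).det * (Matrix.of C).det = 1 := by
    have hcomp : (LinearMap.mulLeft ℚ xu) ∘ₗ (LinearMap.mulLeft ℚ xv) = LinearMap.id := by
      rw [← LinearMap.mulLeft_mul, hxuv, LinearMap.mulLeft_one]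
    have h4 : ((Matrix.of B).map (Int.cast : ℤ → ℚ))ᵀ * ((Matrix.of C).map (Int.cast : ℤ → ℚ))ᵀ
        = (1 : Matrix (Fin n) (Fin n) ℚ) := by
      rw [← hmatu, ← hmatv, ← LinearMap.toMatrix_comp bas bas bas, hcomp,
        LinearMap.toMatrix_id]
    have h5 := congrArg Matrix.det h4
    rw [Matrix.det_mul, Matrix.det_transpose, Matrix.det_transpose, Matrix.det_one] at h5
    have hdB : (((Matrix.of B).det : ℤ) : ℚ) = ((Matrix.of B).map (Int.cast : ℤ → ℚ)).det := by
      exact RingHom.map_det (Int.castRingHom ℚ) (Matrix.of B)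
    have hdC : (((Matrix.of C).det : ℤ) : ℚ) = ((Matrix.of C).map (Int.cast : ℤ → ℚ)).det := by
      exact RingHom.map_det (Int.castRingHom ℚ) (Matrix.of C)
    have h6 : (((Matrix.of B).det * (Matrix.of C).det : ℤ) : ℚ) = 1 := by
      push_cast [Int.cast_mul] at hdB hdC ⊢
      rw [hdB, hdC]
      exact h5
    exact_mod_cast h6
  set α : ℝ := (xu : ℝ) with hα
  have hsum : ∀ i, xu * bas i = ∑ j, (B i j : ℚ) • bas j := by
    intro i
    conv_lhs => rw [← bas.sum_repr (xu * bas i)]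
    exact Finset.sum_congr rfl fun j _ => by rw [hB i j]
  have hαMem : α ∈ MultSet a := by
    refine ⟨Matrix.of B, Int.isUnit_iff.mp (IsUnit.of_mul_eq_one _ hdet), fun i => ?_⟩
    have h7 := congrArg (fun y : F => (y : ℝ)) (hsum i)
    simp only [Rat.smul_def] at h7
    push_cast at h7
    simp only [hbas] at h7
    refine mul_left_cancel₀ hθ ?_
    rw [Finset.mul_sum]
    calc θ * (α * a i) = α * (θ * a i) := by ring
      _ = ∑ j, (B i j : ℝ) * (θ * a j) := h7
      _ = ∑ j, θ * (((Matrix.of B i j : ℤ) : ℝ) * a j) := by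
          refine Finset.sum_congr rfl fun j _ => ?_
          show (B i j : ℝ) * (θ * a j) = θ * ((B i j : ℝ) * a j)
          ring
  rw [hM] at hαMem
  have hα12 : α = 1 ∨ α = -1 := by simpa using hαMem
  rcases hα12 with h | h
  · have hxu1 : xu = 1 := by exact_mod_cast hα.symm.trans h
    have hu1 : (u : 𝓞 F) = 1 := RingOfIntegers.ext (by
      rw [RingOfIntegers.coe_eq_algebraMap, ← hxu, hxu1]; simp)
    have huu : u = 1 := Units.ext (by rw [hu1, Units.val_one])
    exact hε (isOfFinOrder_iff_pow_eq_one.mpr ⟨t, htpos, by rw [← hu]; exact huu⟩)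
  · have hxu1 : xu = -1 := by exact_mod_cast hα.symm.trans h
    have hu1 : (u : 𝓞 F) = -1 := RingOfIntegers.ext (by
      rw [RingOfIntegers.coe_eq_algebraMap, ← hxu, hxu1]; simp)
    have huu : u ^ 2 = 1 := Units.ext (by
      rw [Units.val_pow_eq_pow_val, hu1, Units.val_one]; ring)
    refine hε (isOfFinOrder_iff_pow_eq_one.mpr ⟨t * 2, by omega, ?_⟩)
    rw [pow_mul, ← hu]; exact huu
end

section
/- Let a_1, a_2 ∈ ℝ be linearly independent over ℚ and set a = (a_1, a_2). If M(a) contains an element α with α ≠ 1 and α ≠ −1, then a_2/a_1 is a root of an irreducible quadratic polynomial with rational coefficients; equivalently, a_2/a_1 is algebraic over ℚ of degree exactly 2. -/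
open Matrix

/-- a multiplier other than `±1` forces the frequency ratio
`a₂/a₁` to be a root of an irreducible quadratic rational polynomial, i.e. to
be algebraic over `ℚ` of degree exactly `2`. -/
theorem ratio_root_irreducible_quadratic (a₁ a₂ : ℝ)
    (ha : LinearIndependent ℚ ![a₁, a₂])
    (α : ℝ) (hα : α ∈ MultSet ![a₁, a₂]) (h1 : α ≠ 1) (h2 : α ≠ -1) :
    ∃ p : Polynomial ℚ, Irreducible p ∧ p.degree = 2 ∧
      Polynomial.aeval (a₂ / a₁) p = 0 := by
  rw [MultSet, Set.mem_setOf_eq] at hα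
  obtain ⟨B, hdet, hB⟩ := hα
  have hpair := LinearIndependent.pair_iff.mp ha
  have ha1 : a₁ ≠ 0 := by
    intro h
    have := (hpair 1 0 (by simp [h])).1
    norm_num at this
  set x : ℝ := a₂ / a₁ with hxdef
  have hx : a₂ = x * a₁ := (div_mul_cancel₀ a₂ ha1).symm
  have e1 : α * a₁ = (B 0 0 : ℝ) * a₁ + (B 0 1 : ℝ) * a₂ := by
    simpa [Fin.sum_univ_two] using hB 0
  have e2 : α * a₂ = (B 1 0 : ℝ) * a₁ + (B 1 1 : ℝ) * a₂ := by
    simpa [Fin.sum_univ_two] using hB 1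
  have hdet' : B 0 0 * B 1 1 - B 0 1 * B 1 0 = 1 ∨ B 0 0 * B 1 1 - B 0 1 * B 1 0 = -1 := by
    rwa [Matrix.det_fin_two B] at hdet
  -- B 0 1 ≠ 0
  have hB01 : B 0 1 ≠ 0 := by
    intro h0
    have hα' : α = (B 0 0 : ℝ) := by
      have := e1; rw [h0] at this; push_cast at this
      field_simp at this
      exact mul_right_cancel₀ ha1 (by linarith)
    -- (B 1 0) a₁ + (B 1 1 - B 0 0) a₂ = 0
    have key : ((B 1 0 : ℚ) : ℝ) • a₁ + (((B 1 1 - B 0 0 : ℤ) : ℚ) : ℝ) • a₂ = 0 := by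
      push_cast
      rw [smul_eq_mul, smul_eq_mul]
      rw [hα'] at e2
      ring_nf
      ring_nf at e2
      linarith [e2]
    have := hpair (B 1 0 : ℚ) ((B 1 1 - B 0 0 : ℤ) : ℚ) (by
      have : ((B 1 0 : ℚ)) • a₁ + (((B 1 1 - B 0 0 : ℤ) : ℚ)) • a₂ = 0 := by
        simpa [Rat.smul_def] using key
      exact this)
    obtain ⟨hs, ht⟩ := this
    have hB10 : B 1 0 = 0 := by exact_mod_cast hs
    have hB11 : B 1 1 = B 0 0 := by
      have : (B 1 1 - B 0 0 : ℤ) = 0 := by exact_mod_cast ht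
      omega
    rw [h0, hB10, hB11] at hdet'
    simp at hdet'
    have hsq : B 0 0 * B 0 0 = 1 := by
      rcases hdet' with h | h
      · exact h
      · nlinarith
    have : IsUnit (B 0 0) := IsUnit.of_mul_eq_one (a := B 0 0) (b := B 0 0) hsq
    rcases Int.isUnit_iff.mp this with h | h
    · apply h1; rw [hα', h]; norm_num
    · apply h2; rw [hα', h]; norm_num
  -- now B 0 1 ≠ 0: quadratic for x
  have hB01' : (B 0 1 : ℚ) ≠ 0 := by exact_mod_cast hB01
  have hquad : (B 0 1 : ℝ) * x ^ 2 + ((B 0 0 : ℝ) - (B 1 1 : ℝ)) * x - (B 1 0 : ℝ) = 0 := by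
    have hα' : α = (B 0 0 : ℝ) + (B 0 1 : ℝ) * x := by
      have : α * a₁ = ((B 0 0 : ℝ) + (B 0 1 : ℝ) * x) * a₁ := by
        rw [e1, hx]; ring
      exact mul_right_cancel₀ ha1 this
    have h2' : (α * x) * a₁ = ((B 1 0 : ℝ) + (B 1 1 : ℝ) * x) * a₁ := by
      rw [mul_assoc, ← hx, e2, hx]; ring
    have h2'' : α * x = (B 1 0 : ℝ) + (B 1 1 : ℝ) * x := mul_right_cancel₀ ha1 h2'
    rw [hα'] at h2''
    nlinarith [h2'']
  set p₀ : Polynomial ℚ :=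
    Polynomial.C (B 0 1 : ℚ) * Polynomial.X ^ 2
      + Polynomial.C ((B 0 0 : ℚ) - (B 1 1 : ℚ)) * Polynomial.X
      + Polynomial.C (-(B 1 0 : ℚ)) with hp₀
  have haev : Polynomial.aeval x p₀ = 0 := by
    rw [hp₀]
    simp only [map_add, Polynomial.aeval_mul, map_pow, map_neg, Polynomial.aeval_C,
      Polynomial.aeval_X, eq_ratCast]
    push_cast
    linarith [hquad]
  have hdegp₀ : p₀.natDegree = 2 := by
    rw [hp₀]
    compute_degree!
  have hp₀ne : p₀ ≠ 0 := by
    intro h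
    rw [h] at hdegp₀
    simp at hdegp₀
  have halg : IsAlgebraic ℚ x := ⟨p₀, hp₀ne, haev⟩
  have hint : IsIntegral ℚ x := halg.isIntegral
  refine ⟨minpoly ℚ x, minpoly.irreducible hint, ?_, minpoly.aeval ℚ x⟩
  -- degree = 2
  have hdvd : minpoly ℚ x ∣ p₀ := minpoly.dvd ℚ x haev
  have hle : (minpoly ℚ x).natDegree ≤ 2 := by
    have := Polynomial.natDegree_le_of_dvd hdvd hp₀ne
    omega
  have hirr : x ∉ (algebraMap ℚ ℝ).range := by
    rintro ⟨q, hq⟩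
    have hq' : x = (q : ℝ) := by rw [← hq, eq_ratCast]
    have key : (q : ℚ) • a₁ + ((-1 : ℚ)) • a₂ = 0 := by
      rw [Rat.smul_def, Rat.smul_def, hx, hq']
      push_cast
      ring
    have := (hpair q (-1) key).2
    norm_num at this
  have hge : 2 ≤ (minpoly ℚ x).natDegree := (minpoly.two_le_natDegree_iff hint).mpr hirr
  have : (minpoly ℚ x).natDegree = 2 := le_antisymm hle hge
  rw [Polynomial.degree_eq_natDegree (minpoly.ne_zero hint), this]
  rfl
end

section
/- Let a_1, a_2 ∈ ℝ be linearly independent over ℚ, set a = (a_1, a_2), and suppose M(a) contains an element different from 1 and −1. Then the smallest subfield K = ℚ(a_2/a_1) of ℝ containing a_2/a_1 is a real algebraic number field of degree 2, and a is K-algebraic: with θ = 1/a_1, the numbers θa_1 = 1 and θa_2 = a_2/a_1 form a ℚ-basis of K. -/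
open Matrix

open Polynomial IntermediateField in
/-- Key auxiliary lemma: a real number satisfying a rational quadratic relation
but irrational has minimal polynomial of degree exactly 2. -/
theorem aux_minpoly_deg_two (r : ℝ) (p q : ℚ) (h : r * r = p + q * r)
    (hirr : ∀ s : ℚ, r ≠ (s:ℝ)) :
    IsIntegral ℚ r ∧ (minpoly ℚ r).natDegree = 2 := by
  set pol : ℚ[X] := X^2 - (C q * X + C p) with hpol
  have hmon : pol.Monic := by
    exact Polynomial.monic_X_pow_sub (p := C q * X + C p) (n := 2)
      (lt_of_le_of_lt degree_linear_le (by norm_num))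
  have haev : Polynomial.aeval r pol = 0 := by
    simp [hpol, sq]
    nlinarith [h]
  have hint : IsIntegral ℚ r := ⟨pol, hmon, by rw [← Polynomial.aeval_def]; exact haev⟩
  refine ⟨hint, le_antisymm ?_ ?_⟩
  · have := minpoly.degree_le_of_ne_zero ℚ r hmon.ne_zero haev
    have hd : pol.degree = 2 := by
      rw [hpol]
      compute_degree!
    have := natDegree_le_natDegree this
    rwa [natDegree_eq_of_degree_eq_some hd] at this
  · rw [minpoly.two_le_natDegree_iff hint]
    rintro ⟨s, hs⟩
    exact hirr s (by rw [← hs]; simp)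

open Polynomial IntermediateField in
/-- Key auxiliary lemma: structure of `ℚ(r)` for a quadratic irrational `r`. -/
theorem aux_closure_basis (r : ℝ) (hint : IsIntegral ℚ r)
    (hdeg : (minpoly ℚ r).natDegree = 2) :
    Module.finrank ℚ (Subfield.closure {r} : Subfield ℝ) = 2 ∧
    ∃ bas : Module.Basis (Fin 2) ℚ (Subfield.closure {r} : Subfield ℝ),
      (bas 0 : ℝ) = 1 ∧ (bas 1 : ℝ) = r := by
  set L : IntermediateField ℚ ℝ := ℚ⟮r⟯ with hL
  have hEq : (Subfield.closure {r} : Subfield ℝ) = L.toSubfield := by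
    apply le_antisymm
    · rw [Subfield.closure_le]
      intro x hx
      rw [Set.mem_singleton_iff] at hx
      rw [hx]
      exact IntermediateField.mem_adjoin_simple_self ℚ r
    · have h1 : ∀ x : ℚ, algebraMap ℚ ℝ x ∈ Subfield.closure {r} := fun x =>
        SubfieldClass.ratCast_mem _ x
      have h2 : L ≤ (Subfield.closure {r}).toIntermediateField h1 := by
        rw [hL, IntermediateField.adjoin_le_iff]
        intro x hx
        rw [Set.mem_singleton_iff] at hx
        rw [hx]
        exact Subfield.subset_closure rfl
      intro x hx
      exact h2 hx
  have hmem : ∀ x : ℝ, x ∈ (Subfield.closure {r} : Subfield ℝ) ↔ x ∈ L := by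
    intro x; rw [hEq]; rfl
  let e : L ≃ₗ[ℚ] (Subfield.closure {r} : Subfield ℝ) :=
    { toFun := fun x => ⟨x.1, (hmem _).mpr x.2⟩
      invFun := fun x => ⟨x.1, (hmem _).mp x.2⟩
      map_add' := fun _ _ => rfl
      map_smul' := fun q x => Subtype.ext (by
        push_cast [Rat.smul_def]
        simp)
      left_inv := fun _ => rfl
      right_inv := fun _ => rfl }
  let pb := IntermediateField.adjoin.powerBasis hint
  have hdim : pb.dim = 2 := by
    rw [IntermediateField.adjoin.powerBasis_dim, hdeg]
  let bas : Module.Basis (Fin 2) ℚ (Subfield.closure {r} : Subfield ℝ) :=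
    (pb.basis.reindex (finCongr hdim)).map e
  have hval : ∀ i : Fin 2, (bas i : ℝ) = r ^ (i : ℕ) := by
    intro i
    have h1 : bas i = e (pb.basis ((finCongr hdim).symm i)) := by
      simp [bas, Module.Basis.map_apply]
    have h2 : ((e (pb.basis ((finCongr hdim).symm i)) : (Subfield.closure {r} : Subfield ℝ)) : ℝ)
        = ((pb.basis ((finCongr hdim).symm i) : L) : ℝ) := rfl
    rw [h1, h2, pb.basis_eq_pow]
    push_cast
    rw [IntermediateField.adjoin.powerBasis_gen]
    simp
  refine ⟨?_, bas, by simpa using hval 0, by simpa using hval 1⟩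
  rw [Module.finrank_eq_card_basis bas, Fintype.card_fin]

/-- a multiplier other than `±1` makes `a` algebraic over the
real quadratic number field `K = ℚ(a₂/a₁)`, with `θ = 1/a₁`: the numbers
`θa₁ = 1` and `θa₂ = a₂/a₁` form a `ℚ`-basis of `K`. -/
theorem Kalgebraic_of_nontrivial_multiplier (a₁ a₂ : ℝ)
    (ha : LinearIndependent ℚ ![a₁, a₂])
    (hM : ∃ α ∈ MultSet ![a₁, a₂], α ≠ 1 ∧ α ≠ -1) :
    Module.finrank ℚ (Subfield.closure {a₂ / a₁} : Subfield ℝ) = 2 ∧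
    ∃ bas : Module.Basis (Fin 2) ℚ (Subfield.closure {a₂ / a₁} : Subfield ℝ),
      (bas 0 : ℝ) = (1 / a₁) * a₁ ∧ (bas 1 : ℝ) = (1 / a₁) * a₂ := by
  obtain ⟨α, ⟨B, hdet, hB⟩, hα1, hα2⟩ := hM
  rw [linearIndependent_fin2] at ha
  obtain ⟨ha2, hnr⟩ := ha
  simp only [Matrix.cons_val_one, Matrix.head_cons, Matrix.cons_val_zero] at ha2 hnr
  have ha1 : a₁ ≠ 0 := fun h => hnr 0 (by simp [h])
  have e0 := hB 0
  have e1 := hB 1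
  simp only [Fin.sum_univ_two, Matrix.cons_val_zero, Matrix.cons_val_one,
    Matrix.head_cons] at e0 e1
  rw [Matrix.det_fin_two] at hdet
  -- irrationality of r = a₂ / a₁
  have hirr : ∀ s : ℚ, a₂ / a₁ ≠ (s:ℝ) := by
    intro s hs
    have hs' : a₂ = s * a₁ := by
      field_simp at hs
      linarith [hs]
    rcases eq_or_ne s 0 with h0 | h0
    · rw [h0] at hs'; simp at hs'; exact ha2 hs'
    · apply hnr s⁻¹
      rw [Rat.smul_def, hs']
      push_cast
      field_simp
  -- B 0 1 ≠ 0
  have hb01 : B 0 1 ≠ 0 := by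
    intro hb
    rw [hb] at e0 hdet
    simp at e0 hdet
    have hα : α = B 0 0 := e0.resolve_right ha1
    by_cases hb10 : B 1 0 = 0
    · rw [hb10] at e1
      simp at e1
      have hα' : α = B 1 1 := e1.resolve_right ha2
      have hBe : B 0 0 = B 1 1 := by
        have : ((B 0 0 : ℝ)) = (B 1 1 : ℝ) := by rw [← hα, ← hα']
        exact_mod_cast this
      have hsq : B 0 0 * B 0 0 = 1 := by
        rcases hdet with h | h
        · rw [hBe]; rw [hBe] at h; exact h
        · exfalso; rw [hBe] at h; nlinarith [h]
      rcases Int.isUnit_iff.mp (IsUnit.of_mul_eq_one _ hsq) with h | h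
      · exact hα1 (by rw [hα, h]; norm_num)
      · exact hα2 (by rw [hα, h]; norm_num)
    · apply hnr (((B 0 0 - B 1 1 : ℤ) : ℚ) / ((B 1 0 : ℤ) : ℚ))
      have hb10R : (B 1 0 : ℝ) ≠ 0 := Int.cast_ne_zero.mpr hb10
      rw [Rat.smul_def]
      push_cast
      rw [hα] at e1
      field_simp
      linarith [e1]
  -- the quadratic relation for r
  set r : ℝ := a₂ / a₁ with hrdef
  have hra : a₂ = r * a₁ := by rw [hrdef, div_mul_cancel₀ _ ha1]
  have hb01R : (B 0 1 : ℝ) ≠ 0 := Int.cast_ne_zero.mpr hb01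
  have e0' : α = B 0 0 + B 0 1 * r := by
    apply mul_right_cancel₀ ha1
    rw [e0, hra]; ring
  have e1' : α * r = B 1 0 + B 1 1 * r := by
    apply mul_right_cancel₀ ha1
    rw [mul_assoc, ← hra, e1, hra]; ring
  have key0 : (B 0 1 : ℝ) * (r * r) = B 1 0 + ((B 1 1 : ℝ) - B 0 0) * r := by
    rw [e0'] at e1'
    nlinarith [e1']
  have key : r * r = (((B 1 0 : ℤ) : ℚ) / ((B 0 1 : ℤ) : ℚ) : ℚ)
      + ((((B 1 1 - B 0 0 : ℤ) : ℚ) / ((B 0 1 : ℤ) : ℚ) : ℚ)) * r := by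
    push_cast
    field_simp
    linarith [key0]
  obtain ⟨hint, hdeg⟩ := aux_minpoly_deg_two r _ _ key hirr
  obtain ⟨hfr, bas, h0, h1⟩ := aux_closure_basis r hint hdeg
  refine ⟨hfr, bas, ?_, ?_⟩
  · rw [h0]; field_simp
  · rw [h1, hrdef]; field_simp
end

section
/- Let a_1, a_2 ∈ ℝ be linearly independent over ℚ, set a = (a_1, a_2), and let F be a real algebraic number field of degree 2. If M(a) is a finite-index subgroup of 𝓞_F^×, then a is F-algebraic. -/
open Matrix NumberField NumberField.InfinitePlace

lemma myInfiniteUnits (F : Subfield ℝ) (hF : Module.finrank ℚ F = 2) :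
    Infinite (𝓞 F)ˣ := by
  classical
  haveI : FiniteDimensional ℚ F := FiniteDimensional.of_finrank_eq_succ hF
  haveI : NumberField F := ⟨⟩
  have φre : ComplexEmbedding.IsReal (Complex.ofRealHom.comp F.subtype) := by
    rw [ComplexEmbedding.isReal_iff]
    ext x
    simp [ComplexEmbedding.conjugate_coe_eq]
  have hreal : 1 ≤ nrRealPlaces F := by
    rw [Nat.one_le_iff_ne_zero]
    intro h0
    have : IsEmpty {w : InfinitePlace F // IsReal w} := by
      rwa [← Fintype.card_eq_zero_iff]
    exact this.elim ⟨mk (Complex.ofRealHom.comp F.subtype), isReal_mk_iff.mpr φre⟩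
  have hrank := card_add_two_mul_card_eq_rank F
  rw [hF] at hrank
  have hcard : Fintype.card (InfinitePlace F) = 2 := by
    rw [card_eq_nrRealPlaces_add_nrComplexPlaces]
    omega
  haveI : Nontrivial (InfinitePlace F) := by
    rw [← Fintype.one_lt_card_iff_nontrivial]; omega
  obtain ⟨w₁⟩ : Nonempty (InfinitePlace F) := inferInstance
  obtain ⟨u, hu⟩ := Units.dirichletUnitTheorem.exists_unit (K := F) w₁
  obtain ⟨w, hw⟩ := exists_ne w₁
  have h1 : w u < 1 := by
    have := hu w hw
    nlinarith [Real.exp_log (show (0:ℝ) < w u from pos_iff.mpr (Units.coe_ne_zero u)),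
      Real.exp_lt_one_iff.mpr this]
  have h0 : 0 < w u := pos_iff.mpr (Units.coe_ne_zero u)
  refine Infinite.of_injective (fun n : ℕ => u ^ n) ?_
  intro n m hnm
  have : (w u) ^ n = (w u) ^ m := by
    have := congrArg (fun v : (𝓞 F)ˣ => w ((algebraMap (𝓞 F) F) (v : 𝓞 F))) hnm
    simpa [map_pow] using this
  exact (pow_right_strictAnti₀ h0 h1).injective this

/-- on `T²`, if `M(a)` is a finite-index subgroup of `𝓞_F^×`
then `a` is `F`-algebraic. -/
theorem finiteIndex_imp_falgebraic (a₁ a₂ : ℝ)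
    (ha : LinearIndependent ℚ ![a₁, a₂]) (F : Subfield ℝ)
    (hF : Module.finrank ℚ F = 2)
    (h : MultSetFiniteIndexUnits ![a₁, a₂] F) :
    IsFAlgebraic F ![a₁, a₂] := by
  classical
  obtain ⟨hmem, m, u, hcover⟩ := h
  haveI : Infinite (integralClosure ℤ F)ˣ := myInfiniteUnits F hF
  -- basic consequences of linear independence
  have hpair : ∀ s t : ℚ, (s:ℝ) * a₁ + (t:ℝ) * a₂ = 0 → s = 0 ∧ t = 0 := by
    intro s t hst
    refine LinearIndependent.pair_iff.mp ha s t ?_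
    rw [Rat.smul_def, Rat.smul_def]; exact hst
  have ha₁ : a₁ ≠ 0 := by
    intro h0
    have := (hpair 1 0 (by rw [h0]; ring)).1
    norm_num at this
  have hirr : ∀ q : ℚ, (q:ℝ) * a₁ ≠ a₂ := by
    intro q hq
    have := (hpair q (-1) (by push_cast; linarith)).2
    norm_num at this
  -- any rational multiplier is ±1
  have hrat : ∀ α ∈ MultSet ![a₁, a₂], ∀ q : ℚ, (q:ℝ) = α → α = 1 ∨ α = -1 := by
    rintro α ⟨B, hdet, heq⟩ q hq
    have h0 := heq 0
    have h1 := heq 1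
    simp [Fin.sum_univ_two] at h0 h1
    have e0 : ((q - B 0 0 : ℚ):ℝ) * a₁ + ((-(B 0 1) : ℚ):ℝ) * a₂ = 0 := by
      push_cast
      rw [hq]; linarith
    have e1 : ((-(B 1 0) : ℚ):ℝ) * a₁ + ((q - B 1 1 : ℚ):ℝ) * a₂ = 0 := by
      push_cast
      rw [hq]; linarith
    obtain ⟨hq00, hB01⟩ := hpair _ _ e0
    obtain ⟨hB10, hq11⟩ := hpair _ _ e1
    have hq00' : q = (B 0 0 : ℚ) := by linarith [sub_eq_zero.mp hq00]
    have hq11' : q = (B 1 1 : ℚ) := by linarith [sub_eq_zero.mp hq11]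
    have hB01' : B 0 1 = 0 := by exact_mod_cast neg_eq_zero.mp hB01
    have hB10' : B 1 0 = 0 := by exact_mod_cast neg_eq_zero.mp hB10
    have hB00 : B 0 0 = B 1 1 := by
      have : (B 0 0 : ℚ) = B 1 1 := by rw [← hq00', hq11']
      exact_mod_cast this
    rw [Matrix.det_fin_two, hB01', hB10', ← hB00] at hdet
    simp at hdet
    have : B 0 0 = 1 ∨ B 0 0 = -1 := by
      rcases hdet with hd | hd
      · rcases Int.eq_one_or_neg_one_of_mul_eq_one' hd with ⟨h', _⟩ | ⟨h', _⟩
        · exact Or.inl h'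
        · exact Or.inr h'
      · exfalso; nlinarith [sq_nonneg (B 0 0)]
    rcases this with h' | h'
    · left; rw [← hq, hq00', h']; norm_num
    · right; rw [← hq, hq00', h']; norm_num
  -- the real value of a unit determines the unit
  have hval : ∀ v v' : (integralClosure ℤ F)ˣ,
      (((v : integralClosure ℤ F) : F) : ℝ) = (((v' : integralClosure ℤ F) : F) : ℝ) → v = v' := by
    intro v v' hvv
    exact Units.ext (Subtype.ext (Subtype.ext hvv))
  choose idx αf hαmem hαeq using hcover
  -- there is a multiplier different from ±1
  have hex : ∃ α ∈ MultSet ![a₁, a₂], α ≠ 1 ∧ α ≠ -1 := by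
    by_contra hc
    push_neg at hc
    have hc' : ∀ α ∈ MultSet ![a₁, a₂], α = 1 ∨ α = -1 := by
      intro α hα
      by_cases h1 : α = 1
      · exact Or.inl h1
      · exact Or.inr (hc α hα h1)
    have hinj : Function.Injective (fun v : (integralClosure ℤ F)ˣ =>
        ((idx v : Fin m), decide (αf v = (1:ℝ)))) := by
      intro v v' hvv
      simp only [Prod.mk.injEq, decide_eq_decide] at hvv
      obtain ⟨hi, hb⟩ := hvv
      have hαv : αf v = αf v' := by
        rcases hc' _ (hαmem v) with h1 | h1 <;> rcases hc' _ (hαmem v') with h2 | h2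
        · rw [h1, h2]
        · exact absurd ((hb.mp (by rw [h1])).symm.trans h2) (by norm_num)
        · exact absurd ((hb.mpr (by rw [h2])).symm.trans h1) (by norm_num)
        · rw [h1, h2]
      apply hval
      rw [hαeq v, hαeq v', hi, hαv]
    exact (Finite.of_injective _ hinj).not_infinite inferInstance
  obtain ⟨α, hα, hα1, hαm1⟩ := hex
  obtain ⟨B, hdet, heq⟩ := hα
  have h0 := heq 0
  simp [Fin.sum_univ_two] at h0
  have hB01 : B 0 1 ≠ 0 := by
    intro hB
    rw [hB] at h0
    have h' : (α - (B 0 0 : ℝ)) * a₁ = 0 := by push_cast at h0 ⊢; linarith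
    have hα0 : α = (B 0 0 : ℝ) := by
      rcases mul_eq_zero.mp h' with h'' | h''
      · linarith [sub_eq_zero.mp h'']
      · exact absurd h'' ha₁
    rcases hrat α ⟨B, hdet, heq⟩ ((B 0 0 : ℤ) : ℚ) (by push_cast; rw [hα0]) with hh | hh
    · exact hα1 hh
    · exact hαm1 hh
  have hB01R : ((B 0 1 : ℤ) : ℝ) ≠ 0 := Int.cast_ne_zero.mpr hB01
  obtain ⟨uα, huα⟩ := hmem α ⟨B, hdet, heq⟩
  set x : F := ((uα : integralClosure ℤ F) : F) with hx
  set y : F := (x - ((B 0 0 : ℤ) : F)) / ((B 0 1 : ℤ) : F) with hy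
  have hyR : (y : ℝ) = (α - ((B 0 0 : ℤ) : ℝ)) / ((B 0 1 : ℤ) : ℝ) := by
    rw [hy]
    push_cast
    rw [huα]
  have ha₂ : a₂ = (y : ℝ) * a₁ := by
    rw [hyR]
    field_simp
    nlinarith [h0]
  have hyirr : ∀ q : ℚ, ((q : ℝ)) ≠ (y : ℝ) := by
    intro q hq
    exact hirr q (by rw [hq, ← ha₂])
  have li : LinearIndependent ℚ ![(1 : F), y] := by
    rw [LinearIndependent.pair_iff]
    intro s t hst
    have hR : (s : ℝ) + (t : ℝ) * (y : ℝ) = 0 := by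
      have h'' := congrArg (fun z : F => (z : ℝ)) hst
      simp only [Rat.smul_def] at h''
      push_cast at h''
      linarith [h'']
    have ht : t = 0 := by
      by_contra ht
      apply hyirr (-s / t)
      push_cast
      have htR : (t : ℝ) ≠ 0 := by exact_mod_cast ht
      field_simp
      linarith [hR]
    have hs : s = 0 := by
      rw [ht] at hR
      push_cast at hR
      exact_mod_cast (by linarith [hR] : (s : ℝ) = 0)
    exact ⟨hs, ht⟩
  have cardeq : Fintype.card (Fin 2) = Module.finrank ℚ F := by simp [hF]
  refine ⟨a₁⁻¹, inv_ne_zero ha₁, basisOfLinearIndependentOfCardEqFinrank li cardeq, ?_⟩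
  intro i
  rw [coe_basisOfLinearIndependentOfCardEqFinrank]
  fin_cases i
  · simp only [Matrix.cons_val_zero]
    push_cast
    field_simp
  · simp only [Matrix.cons_val_one, Matrix.head_cons]
    rw [ha₂]
    field_simp
    show (y : ℝ) * a₁ = a₁ * y
    ring
end

section
/- Let a_1, a_2 ∈ ℝ be linearly independent over ℚ and set a = (a_1, a_2). If a is transcendental, i.e., a is not F-algebraic for any real algebraic number field F of degree 2, then M(a) = {1, −1}. -/
open Matrix

open Polynomial IntermediateField in
/-- An intermediate field of `ℝ` over `ℚ` is `ℚ`-linearly equivalent to the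
corresponding subfield of `ℝ`. -/
noncomputable def sfEquiv (K : IntermediateField ℚ ℝ) : K ≃ₗ[ℚ] K.toSubfield where
  toFun x := ⟨x.1, x.2⟩
  invFun x := ⟨x.1, x.2⟩
  left_inv _ := rfl
  right_inv _ := rfl
  map_add' _ _ := rfl
  map_smul' q x := by
    ext
    show ((q • x : K) : ℝ) = ((q • (⟨x.1, x.2⟩ : K.toSubfield) : K.toSubfield) : ℝ)
    rw [Rat.smul_def, Rat.smul_def]
    push_cast
    rfl

open Polynomial IntermediateField in
/-- A real irrational root of a monic rational quadratic generates a real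
quadratic field with basis `1, β`. -/
theorem exists_quadratic_subfield (β : ℝ) (hirr : β ∉ Set.range ((↑) : ℚ → ℝ))
    (c₁ c₀ : ℚ) (hroot : β ^ 2 + (c₁ : ℝ) * β + (c₀ : ℝ) = 0) :
    ∃ F : Subfield ℝ, Module.finrank ℚ F = 2 ∧
      ∃ bas : Module.Basis (Fin 2) ℚ F, ((bas 0 : ℝ) = 1 ∧ (bas 1 : ℝ) = β) := by
  set p : ℚ[X] := X ^ 2 + (C c₁ * X + C c₀) with hp
  have hm : p.Monic := monic_X_pow_add (degree_linear_le.trans_lt (by norm_num))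
  have haev : aeval β p = 0 := by
    simp only [hp, map_add, map_pow, _root_.map_mul, aeval_X, aeval_C]
    rw [show ((algebraMap ℚ ℝ) c₁ : ℝ) = (c₁ : ℝ) from rfl,
      show ((algebraMap ℚ ℝ) c₀ : ℝ) = (c₀ : ℝ) from rfl]
    linear_combination hroot
  have hint : IsIntegral ℚ β := ⟨p, hm, haev⟩
  have hpdeg : p.natDegree = 2 := by
    rw [hp]
    compute_degree!
  have hdeg : (minpoly ℚ β).natDegree = 2 := by
    have hle : (minpoly ℚ β).natDegree ≤ 2 := by
      have := Polynomial.natDegree_le_natDegree (minpoly.min ℚ β hm haev)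
      omega
    have hge : 2 ≤ (minpoly ℚ β).natDegree := by
      rw [minpoly.two_le_natDegree_iff hint]
      simpa [RingHom.mem_range, eq_comm] using hirr
    omega
  set K := ℚ⟮β⟯ with hK
  refine ⟨K.toSubfield, ?_, ?_⟩
  · rw [← (sfEquiv K).finrank_eq, IntermediateField.adjoin.finrank hint, hdeg]
  · have hdim : (IntermediateField.adjoin.powerBasis hint).dim = 2 := by
      simpa using hdeg
    refine ⟨((IntermediateField.adjoin.powerBasis hint).basis.reindex (finCongr hdim)).map
      (sfEquiv K), ?_, ?_⟩
    · rw [Module.Basis.map_apply, Module.Basis.reindex_apply]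
      show (((IntermediateField.adjoin.powerBasis hint).basis _ : K) : ℝ) = 1
      rw [PowerBasis.basis_eq_pow]
      simp
    · rw [Module.Basis.map_apply, Module.Basis.reindex_apply]
      show (((IntermediateField.adjoin.powerBasis hint).basis _ : K) : ℝ) = β
      rw [PowerBasis.basis_eq_pow]
      simp

open Polynomial in
/-- A rational root of a monic integer quadratic with constant term `±1`
is `±1`. -/
theorem rat_root_pm_one (q : ℚ) (t d : ℤ) (hd : d = 1 ∨ d = -1)
    (hq : q ^ 2 - (t : ℚ) * q + (d : ℚ) = 0) : q = 1 ∨ q = -1 := by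
  have hint : IsIntegral ℤ q := by
    refine ⟨X ^ 2 + (C (-t) * X + C d),
      monic_X_pow_add (degree_linear_le.trans_lt (by norm_num)), ?_⟩
    simp only [eval₂_add, eval₂_mul, eval₂_X, eval₂_C, eval₂_pow]
    rw [show ((algebraMap ℤ ℚ) (-t) : ℚ) = ((-t : ℤ) : ℚ) from rfl,
      show ((algebraMap ℤ ℚ) d : ℚ) = ((d : ℤ) : ℚ) from rfl]
    push_cast
    linear_combination hq
  obtain ⟨z, hz⟩ := IsIntegrallyClosed.isIntegral_iff.mp hint
  have hz' : (z : ℚ) = q := by exact_mod_cast hz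
  subst hz'
  have hzq : z ^ 2 - t * z + d = 0 := by exact_mod_cast hq
  have hdvd : z ∣ d := ⟨t - z, by linarith [hzq]⟩
  have : IsUnit z := isUnit_of_dvd_unit hdvd (by rcases hd with h | h <;> simp [h])
  rcases Int.isUnit_iff.mp this with h | h <;> [left; right] <;>
    exact_mod_cast congrArg Int.cast h

/-- on `T²`, a transcendental frequency vector has multiplier set
exactly `{1, -1}`. -/
theorem transcendental_imp_multSet_pm_one (a₁ a₂ : ℝ)
    (ha : LinearIndependent ℚ ![a₁, a₂])
    (htr : ∀ F : Subfield ℝ, Module.finrank ℚ F = 2 →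
      ¬ IsFAlgebraic F ![a₁, a₂]) :
    MultSet ![a₁, a₂] = {1, -1} := by
  have ha1 : a₁ ≠ 0 := by simpa using ha.ne_zero 0
  have ha2 : a₂ ≠ 0 := by simpa using ha.ne_zero 1
  ext α
  constructor
  · rintro ⟨B, hdet, heq⟩
    have h0 := heq 0
    have h1 := heq 1
    simp only [Fin.sum_univ_two, Matrix.cons_val_zero, Matrix.cons_val_one,
      Matrix.head_cons] at h0 h1
    obtain ⟨β, hβdef⟩ : ∃ β : ℝ, β = a₂ / a₁ := ⟨_, rfl⟩
    have hβ : a₂ = β * a₁ := by rw [hβdef]; exact (div_mul_cancel₀ a₂ ha1).symm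
    have hirr : ∀ q : ℚ, (q : ℝ) ≠ β := by
      intro q hq
      have := (LinearIndependent.pair_iff' ha1).mp ha q
      apply this
      rw [Rat.smul_def, hq, hβdef]
      exact div_mul_cancel₀ a₂ ha1
    have e1 : α = (B 0 0 : ℝ) + (B 0 1 : ℝ) * β := by
      apply mul_right_cancel₀ ha1
      rw [hβ] at h0
      linear_combination h0
    have e2 : α * β = (B 1 0 : ℝ) + (B 1 1 : ℝ) * β := by
      apply mul_right_cancel₀ ha1
      rw [hβ] at h1
      linear_combination h1
    by_cases hrat : ∃ q : ℚ, (q : ℝ) = α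
    · obtain ⟨q, rfl⟩ := hrat
      have quad : (q : ℝ) ^ 2 - ((B 0 0 : ℝ) + (B 1 1 : ℝ)) * q
          + ((B 0 0 : ℝ) * (B 1 1 : ℝ) - (B 0 1 : ℝ) * (B 1 0 : ℝ)) = 0 := by
        linear_combination ((q : ℝ) - (B 1 1 : ℝ)) * e1 + (B 0 1 : ℝ) * e2
      have hdet2 : (B.det : ℝ) = (B 0 0 : ℝ) * (B 1 1 : ℝ) - (B 0 1 : ℝ) * (B 1 0 : ℝ) := by
        rw [Matrix.det_fin_two]
        push_cast
        ring
      have hqQ : q ^ 2 - ((B 0 0 + B 1 1 : ℤ) : ℚ) * q + ((B.det : ℤ) : ℚ) = 0 := by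
        have : (q : ℝ) ^ 2 - (((B 0 0 + B 1 1 : ℤ) : ℚ) : ℝ) * q + (((B.det : ℤ) : ℚ) : ℝ) = 0 := by
          push_cast
          rw [Matrix.det_fin_two]
          push_cast
          simp only [Matrix.map_apply, Rat.cast_intCast]
          linear_combination quad
        exact_mod_cast this
      rcases rat_root_pm_one q (B 0 0 + B 1 1) B.det hdet hqQ with h | h <;>
        subst h <;> simp
    · exfalso
      have hb01 : B 0 1 ≠ 0 := by
        intro h
        exact hrat ⟨B 0 0, by rw [e1, h]; push_cast; ring⟩
      have hb01R : ((B 0 1 : ℤ) : ℝ) ≠ 0 := Int.cast_ne_zero.mpr hb01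
      have key : (B 0 1 : ℝ) * β ^ 2 + ((B 0 0 : ℝ) - (B 1 1 : ℝ)) * β - (B 1 0 : ℝ) = 0 := by
        linear_combination e2 - β * e1
      set c₁ : ℚ := ((B 0 0 - B 1 1 : ℤ) : ℚ) / ((B 0 1 : ℤ) : ℚ) with hc₁
      set c₀ : ℚ := ((-(B 1 0) : ℤ) : ℚ) / ((B 0 1 : ℤ) : ℚ) with hc₀
      have hroot : β ^ 2 + (c₁ : ℝ) * β + (c₀ : ℝ) = 0 := by
        rw [hc₁, hc₀]
        push_cast
        field_simp
        linear_combination key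
      have hirr' : β ∉ Set.range ((↑) : ℚ → ℝ) := by
        rintro ⟨q, hq⟩
        exact hirr q hq
      obtain ⟨F, hfin, bas, hb0, hb1⟩ := exists_quadratic_subfield β hirr' c₁ c₀ hroot
      apply htr F hfin
      refine ⟨a₁⁻¹, inv_ne_zero ha1, bas, ?_⟩
      intro i
      fin_cases i
      · simpa [hb0] using (inv_mul_cancel₀ ha1).symm
      · simp [hb1, hβdef, div_eq_inv_mul]
  · intro hα
    rcases hα with h | h
    · subst h
      refine ⟨1, Or.inl Matrix.det_one, ?_⟩
      intro i
      fin_cases i <;> simp [Fin.sum_univ_two, Matrix.one_apply]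
    · rw [Set.mem_singleton_iff] at h
      subst h
      refine ⟨-1, Or.inl (by rw [Matrix.det_neg]; simp), ?_⟩
      intro i
      fin_cases i <;> simp [Fin.sum_univ_two, Matrix.one_apply]
end

section
/- Let a_1, a_2 ∈ ℝ be linearly independent over ℚ and set a = (a_1, a_2). Then a is transcendental (not F-algebraic for any real algebraic number field F of degree 2) if and only if M(a) = {1, −1}. -/
open Matrix

/-- The quadratic field `ℚ(β)` for an irrational real `β` with `β ^ 2 = p * β + q`. -/
noncomputable def quadField (β : ℝ) (p q : ℚ) (hq : β ^ 2 = p * β + q)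
    (hirr : ∀ r : ℚ, β ≠ r) : Subfield ℝ where
  carrier := {x : ℝ | ∃ u v : ℚ, x = u + v * β}
  one_mem' := ⟨1, 0, by push_cast; ring⟩
  zero_mem' := ⟨0, 0, by push_cast; ring⟩
  add_mem' := by
    rintro x y ⟨u, v, rfl⟩ ⟨u', v', rfl⟩
    exact ⟨u + u', v + v', by push_cast; ring⟩
  neg_mem' := by
    rintro x ⟨u, v, rfl⟩
    exact ⟨-u, -v, by push_cast; ring⟩
  mul_mem' := by
    rintro x y ⟨u, v, rfl⟩ ⟨u', v', rfl⟩
    refine ⟨u * u' + q * v * v', u * v' + u' * v + p * v * v', ?_⟩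
    push_cast
    linear_combination ((v : ℝ) * v') * hq
  inv_mem' := by
    rintro x ⟨u, v, rfl⟩
    by_cases hv : v = 0
    · subst hv
      by_cases hu : u = 0
      · subst hu; exact ⟨0, 0, by push_cast; simp⟩
      · exact ⟨u⁻¹, 0, by push_cast; simp⟩
    · have hvR : (v : ℝ) ≠ 0 := by exact_mod_cast hv
      have hx : (u : ℝ) + v * β ≠ 0 := by
        intro h
        refine hirr (-u / v) ?_
        push_cast
        field_simp
        linarith
      have hy : ((u : ℝ) + p * v) - v * β ≠ 0 := by
        intro h
        refine hirr ((u + p * v) / v) ?_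
        push_cast
        field_simp
        linarith
      have hnorm : ((u : ℝ) + v * β) * (((u : ℝ) + p * v) - v * β)
          = ((u ^ 2 + p * u * v - q * v ^ 2 : ℚ) : ℝ) := by
        push_cast
        linear_combination (-(v : ℝ) ^ 2) * hq
      have hn : (u ^ 2 + p * u * v - q * v ^ 2 : ℚ) ≠ 0 := by
        intro h
        rw [h] at hnorm
        push_cast at hnorm
        exact (mul_ne_zero hx hy) hnorm
      set n : ℚ := u ^ 2 + p * u * v - q * v ^ 2 with hn_def
      have hnR : ((n : ℚ) : ℝ) ≠ 0 := by exact_mod_cast hn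
      refine ⟨(u + p * v) / n, -v / n, inv_eq_of_mul_eq_one_right ?_⟩
      have hnRdef : ((n : ℚ) : ℝ) = (u : ℝ) ^ 2 + p * u * v - q * v ^ 2 := by
        rw [hn_def]; push_cast; ring
      push_cast
      field_simp
      linear_combination (-(v : ℝ) ^ 2) * hq - hnRdef

lemma quadField_spec (β : ℝ) (p q : ℚ) (hq : β ^ 2 = p * β + q)
    (hirr : ∀ r : ℚ, β ≠ r) :
    ∃ bas : Module.Basis (Fin 2) ℚ (quadField β p q hq hirr),
      ((bas 0 : ℝ) = 1 ∧ (bas 1 : ℝ) = β) ∧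
      Module.finrank ℚ (quadField β p q hq hirr) = 2 := by
  set F := quadField β p q hq hirr with hF
  have h1 : (1 : ℝ) ∈ F := F.one_mem
  have hβ : β ∈ F := ⟨0, 1, by push_cast; ring⟩
  set e : Fin 2 → F := ![⟨1, h1⟩, ⟨β, hβ⟩] with he
  have he0 : ((e 0 : F) : ℝ) = 1 := rfl
  have he1 : ((e 1 : F) : ℝ) = β := rfl
  have hli : LinearIndependent ℚ e := by
    rw [he, LinearIndependent.pair_iff]
    intro s t hst
    have hst' : (s : ℝ) + t * β = 0 := by
      have h := congrArg (fun x : F => (x : ℝ)) hst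
      push_cast [Rat.smul_def] at h
      simpa using h
    have ht : t = 0 := by
      by_contra ht
      have htR : (t : ℝ) ≠ 0 := by exact_mod_cast ht
      refine hirr (-s / t) ?_
      push_cast
      field_simp
      linarith
    subst ht
    have hs : (s : ℝ) = 0 := by simpa using hst'
    exact ⟨by exact_mod_cast hs, rfl⟩
  have hsp : ⊤ ≤ Submodule.span ℚ (Set.range e) := by
    rintro ⟨x, u, v, rfl⟩ -
    have hx : (⟨(u : ℝ) + v * β, u, v, rfl⟩ : F) = u • e 0 + v • e 1 := by
      apply Subtype.ext
      push_cast [Rat.smul_def, he0, he1]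
      ring
    rw [hx]
    exact Submodule.add_mem _
      (Submodule.smul_mem _ _ (Submodule.subset_span ⟨0, rfl⟩))
      (Submodule.smul_mem _ _ (Submodule.subset_span ⟨1, rfl⟩))
  refine ⟨Module.Basis.mk hli hsp, ⟨?_, ?_⟩, ?_⟩
  · rw [Module.Basis.mk_apply]; exact he0
  · rw [Module.Basis.mk_apply]; exact he1
  · rw [Module.finrank_eq_card_basis (Module.Basis.mk hli hsp), Fintype.card_fin]

/-- The Pell-equation construction of a nontrivial multiplier. -/
lemma exists_nontrivial_multiplier (a₁ a₂ β : ℝ) (ha₂ : a₂ = β * a₁)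
    (hirr : ∀ r : ℚ, β ≠ (r : ℝ))
    (p q : ℚ) (hq : β ^ 2 = p * β + q) :
    ∃ α ∈ MultSet ![a₁, a₂], α ≠ 1 ∧ α ≠ -1 := by
  subst ha₂
  have key : ∀ (x y : ℤ), y ≠ 0 → β * (y : ℝ) = (x : ℝ) → False := by
    intro x y hy h
    refine hirr ((x : ℚ) / (y : ℚ)) ?_
    have hy' : ((y : ℚ) : ℝ) ≠ 0 := by exact_mod_cast hy
    rw [Rat.cast_div, eq_div_iff hy']
    push_cast at h ⊢
    linarith
  set N : ℤ := (p.den : ℤ) * (q.den : ℤ) with hN_def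
  have hNne : N ≠ 0 := by
    simp [hN_def, p.den_ne_zero, q.den_ne_zero]
  set P : ℤ := p.num * (q.den : ℤ) with hP_def
  set Q : ℤ := q.num * (p.den : ℤ) with hQ_def
  have hpden : ((p.den : ℚ)) * p = (p.num : ℚ) := by
    exact_mod_cast Rat.den_mul_eq_num p
  have hqden : ((q.den : ℚ)) * q = (q.num : ℚ) := by
    exact_mod_cast Rat.den_mul_eq_num q
  have hPp : ((P : ℚ)) = (N : ℚ) * p := by
    rw [hP_def, hN_def]
    push_cast
    linear_combination (-(q.den : ℚ)) * hpden
  have hQq : ((Q : ℚ)) = (N : ℚ) * q := by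
    rw [hQ_def, hN_def]
    push_cast
    linear_combination (-(p.den : ℚ)) * hqden
  have hPR : ((P : ℝ)) = (N : ℝ) * (p : ℝ) := by exact_mod_cast hPp
  have hQR : ((Q : ℝ)) = (N : ℝ) * (q : ℝ) := by exact_mod_cast hQq
  set D : ℤ := P ^ 2 + 4 * N * Q with hD_def
  set δ : ℝ := 2 * N * β - P with hδ_def
  have hδ : δ ^ 2 = (D : ℝ) := by
    rw [hδ_def, hD_def]
    push_cast
    linear_combination 4 * (N : ℝ) ^ 2 * hq - 4 * (N : ℝ) * β * hPR - 4 * (N : ℝ) * hQR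
  have hDnonneg : 0 ≤ D := by
    have : (0 : ℝ) ≤ (D : ℝ) := hδ ▸ sq_nonneg δ
    exact_mod_cast this
  have hDsq : ¬ IsSquare D := by
    rintro ⟨k, hk⟩
    have h2 : (δ - k) * (δ + k) = 0 := by
      have h3 : (D : ℝ) = (k : ℝ) * (k : ℝ) := by exact_mod_cast hk
      rw [h3] at hδ
      linear_combination hδ
    have h2N : (2 * N : ℤ) ≠ 0 := mul_ne_zero two_ne_zero hNne
    rcases mul_eq_zero.1 h2 with h | h
    · refine key (k + P) (2 * N) h2N ?_
      push_cast
      rw [hδ_def] at h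
      push_cast at h
      linarith
    · refine key (-k + P) (2 * N) h2N ?_
      push_cast
      rw [hδ_def] at h
      push_cast at h
      linarith
  have hDpos : 0 < D := by
    rcases hDnonneg.lt_or_eq with h | h
    · exact h
    · exact absurd ⟨0, by simp [← h]⟩ hDsq
  obtain ⟨u, v, huv, hv⟩ := Pell.exists_of_not_isSquare hDpos hDsq
  refine ⟨(u : ℝ) - v * P + 2 * N * v * β,
    ⟨!![u - v * P, 2 * N * v; 2 * v * Q, u + v * P], ?_, ?_⟩, ?_, ?_⟩
  · left
    rw [Matrix.det_fin_two_of]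
    linear_combination huv + v ^ 2 * hD_def
  · intro i
    fin_cases i
    · simp only [Fin.sum_univ_two, Matrix.cons_val_zero, Matrix.cons_val_one, Matrix.head_cons,
        Matrix.cons_val', Matrix.cons_val_fin_one, Matrix.empty_val', Matrix.of_apply,
        Matrix.head_fin_const, Fin.zero_eta, Fin.mk_one]
      push_cast
      ring
    · simp only [Fin.sum_univ_two, Matrix.cons_val_zero, Matrix.cons_val_one, Matrix.head_cons,
        Matrix.cons_val', Matrix.cons_val_fin_one, Matrix.empty_val', Matrix.of_apply,
        Matrix.head_fin_const, Fin.zero_eta, Fin.mk_one]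
      push_cast
      linear_combination 2 * (N : ℝ) * v * a₁ * hq - 2 * (v : ℝ) * β * a₁ * hPR
        - 2 * (v : ℝ) * a₁ * hQR
  · intro h
    refine key (1 - u + v * P) (2 * N * v) (mul_ne_zero (mul_ne_zero two_ne_zero hNne) hv) ?_
    push_cast
    linarith
  · intro h
    refine key (-1 - u + v * P) (2 * N * v) (mul_ne_zero (mul_ne_zero two_ne_zero hNne) hv) ?_
    push_cast
    linarith

/-- on `T²`, transcendentality is equivalent to the multiplier
set being exactly `{1, -1}`. -/
theorem transcendental_iff_multSet_pm_one (a₁ a₂ : ℝ)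
    (ha : LinearIndependent ℚ ![a₁, a₂]) :
    (∀ F : Subfield ℝ, Module.finrank ℚ F = 2 → ¬ IsFAlgebraic F ![a₁, a₂]) ↔
      MultSet ![a₁, a₂] = {1, -1} := by
  have ha1 : a₁ ≠ 0 := by
    intro h
    obtain ⟨h1, -⟩ := LinearIndependent.pair_iff.1 ha 1 0 (by simp [h])
    exact one_ne_zero h1
  have hirr : ∀ r : ℚ, a₂ / a₁ ≠ (r : ℝ) := by
    intro r h
    rw [div_eq_iff ha1] at h
    obtain ⟨-, h1⟩ := LinearIndependent.pair_iff.1 ha r (-1)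
      (by rw [Rat.smul_def, Rat.smul_def]; push_cast; linarith)
    norm_num at h1
  constructor
  · -- transcendental → MultSet = {1, -1}
    intro H
    ext α
    simp only [Set.mem_insert_iff, Set.mem_singleton_iff]
    constructor
    · rintro ⟨B, hdet, hB⟩
      have h0 := hB 0
      have h1 := hB 1
      rw [Fin.sum_univ_two] at h0 h1
      simp only [Matrix.cons_val_zero, Matrix.cons_val_one, Matrix.head_cons] at h0 h1
      by_cases hB01 : B 0 1 = 0
      · -- diagonal case : α = ±1
        rw [hB01] at h0
        push_cast at h0
        have hα : α = (B 0 0 : ℝ) := by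
          have := mul_right_cancel₀ ha1 (by linarith : α * a₁ = (B 0 0 : ℝ) * a₁)
          exact this
        obtain ⟨hs, ht⟩ := LinearIndependent.pair_iff.1 ha (B 1 0 : ℚ)
          ((B 1 1 : ℚ) - (B 0 0 : ℚ)) (by
            rw [Rat.smul_def, Rat.smul_def]
            push_cast
            rw [hα] at h1
            linarith)
        have hB10 : B 1 0 = 0 := by exact_mod_cast hs
        have hB11 : (B 1 1 : ℚ) = (B 0 0 : ℚ) := by linarith [sub_eq_zero.1 ht]
        have hB11' : B 1 1 = B 0 0 := by exact_mod_cast hB11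
        rw [Matrix.det_fin_two, hB01, hB10, hB11'] at hdet
        simp only [mul_zero, sub_zero] at hdet
        rcases hdet with h | h
        · rcases mul_self_eq_one_iff.1 h with h' | h'
          · left; rw [hα, h']; norm_num
          · right; rw [hα, h']; norm_num
        · exfalso
          nlinarith [mul_self_nonneg (B 0 0)]
      · -- off-diagonal case: contradiction with transcendence
        exfalso
        have hB01R : ((B 0 1 : ℝ)) ≠ 0 := by exact_mod_cast hB01
        have hβa : a₂ = (a₂ / a₁) * a₁ := by field_simp
        have hαβ : α = (B 0 0 : ℝ) + (B 0 1 : ℝ) * (a₂ / a₁) := by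
          refine mul_right_cancel₀ ha1 ?_
          rw [hβa] at h0
          linear_combination h0
        have hx : α * (a₂ / a₁) = (B 1 0 : ℝ) + (B 1 1 : ℝ) * (a₂ / a₁) := by
          refine mul_right_cancel₀ ha1 ?_
          rw [hβa] at h1
          linear_combination h1
        set p : ℚ := ((B 1 1 : ℚ) - (B 0 0 : ℚ)) / (B 0 1 : ℚ) with hp_def
        set q : ℚ := (B 1 0 : ℚ) / (B 0 1 : ℚ) with hq_def
        have hB01Q : ((B 0 1 : ℚ)) ≠ 0 := by exact_mod_cast hB01
        have hquad : (a₂ / a₁) ^ 2 = (p : ℝ) * (a₂ / a₁) + (q : ℝ) := by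
          have hpR : (p : ℝ) = ((B 1 1 : ℝ) - (B 0 0 : ℝ)) / (B 0 1 : ℝ) := by
            rw [hp_def]; push_cast; ring
          have hqR : (q : ℝ) = (B 1 0 : ℝ) / (B 0 1 : ℝ) := by
            rw [hq_def]; push_cast; ring
          rw [hpR, hqR]
          generalize a₂ / a₁ = β at hαβ hx ⊢
          field_simp
          linear_combination hx - β * hαβ
        obtain ⟨bas, ⟨hb0, hb1⟩, hrank⟩ := quadField_spec (a₂ / a₁) p q hquad hirr
        refine H _ hrank ⟨a₁⁻¹, inv_ne_zero ha1, bas, ?_⟩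
        intro i
        fin_cases i
        · simp only [Matrix.cons_val_zero, Fin.zero_eta]
          rw [hb0, inv_mul_cancel₀ ha1]
        · simp only [Matrix.cons_val_one, Matrix.head_cons, Fin.mk_one, Matrix.cons_val_zero]
          rw [hb1, div_eq_inv_mul]
    · rintro (rfl | rfl)
      · refine ⟨!![1, 0; 0, 1], Or.inl (by rw [Matrix.det_fin_two_of]; ring), ?_⟩
        intro i
        fin_cases i <;>
          · rw [Fin.sum_univ_two]
            simp
      · refine ⟨!![-1, 0; 0, -1], Or.inl (by rw [Matrix.det_fin_two_of]; ring), ?_⟩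
        intro i
        fin_cases i <;>
          · rw [Fin.sum_univ_two]
            simp
  · -- MultSet = {1, -1} → transcendental
    rintro hM F hrank ⟨θ, hθ, bas, hbas⟩
    haveI : Module.Finite ℚ F := Module.Finite.of_basis bas
    have hb0 : (bas 0 : ℝ) = θ * a₁ := by simpa using hbas 0
    have hb1 : (bas 1 : ℝ) = θ * a₂ := by simpa using hbas 1
    have hb0ne : (bas 0 : F) ≠ 0 := by
      intro h
      apply mul_ne_zero hθ ha1
      rw [← hb0, h]
      simp
    set γ : F := bas 1 / bas 0 with hγ_def
    have hγ : (γ : ℝ) = a₂ / a₁ := by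
      rw [hγ_def]
      push_cast
      rw [hb0, hb1]
      rw [mul_div_mul_left _ _ hθ]
    have hnli : ¬ LinearIndependent ℚ ![(1 : F), γ, γ ^ 2] := by
      intro h
      have hle := h.fintype_card_le_finrank
      rw [hrank] at hle
      simp at hle
    rw [Fintype.not_linearIndependent_iff] at hnli
    obtain ⟨g, hg, i, hgi⟩ := hnli
    rw [Fin.sum_univ_three] at hg
    simp only [Matrix.cons_val_zero, Matrix.cons_val_one, Matrix.head_cons,
      Matrix.cons_val_two, Matrix.tail_cons] at hg
    have hgR : (g 0 : ℝ) + (g 1 : ℝ) * (a₂ / a₁) + (g 2 : ℝ) * (a₂ / a₁) ^ 2 = 0 := by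
      have h := congrArg (fun x : F => (x : ℝ)) hg
      push_cast [Rat.smul_def] at h
      rw [hγ] at h
      linarith
    by_cases hg2 : g 2 = 0
    · rw [hg2] at hgR
      push_cast at hgR
      by_cases hg1 : g 1 = 0
      · rw [hg1] at hgR
        push_cast at hgR
        have hg0 : g 0 = 0 := by
          have : (g 0 : ℝ) = 0 := by linarith
          exact_mod_cast this
        fin_cases i
        · exact hgi hg0
        · exact hgi hg1
        · exact hgi hg2
      · have hg1R : ((g 1 : ℚ) : ℝ) ≠ 0 := by exact_mod_cast hg1
        refine hirr (-(g 0) / (g 1)) ?_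
        push_cast
        rw [eq_div_iff hg1R]
        linear_combination hgR
    · set p : ℚ := -(g 1) / (g 2) with hp_def
      set q : ℚ := -(g 0) / (g 2) with hq_def
      have hg2R : ((g 2 : ℚ) : ℝ) ≠ 0 := by exact_mod_cast hg2
      have hquad : (a₂ / a₁) ^ 2 = (p : ℝ) * (a₂ / a₁) + (q : ℝ) := by
        have hpR : (p : ℝ) = -(g 1 : ℝ) / (g 2 : ℝ) := by rw [hp_def]; push_cast; ring
        have hqR : (q : ℝ) = -(g 0 : ℝ) / (g 2 : ℝ) := by rw [hq_def]; push_cast; ring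
        rw [hpR, hqR]
        generalize a₂ / a₁ = β at hgR ⊢
        field_simp
        linear_combination hgR
      obtain ⟨α, hmem, hα1, hα2⟩ := exists_nontrivial_multiplier a₁ a₂ (a₂ / a₁)
        (by field_simp) hirr p q hquad
      rw [hM] at hmem
      simp only [Set.mem_insert_iff, Set.mem_singleton_iff] at hmem
      rcases hmem with rfl | rfl
      · exact hα1 rfl
      · exact hα2 rfl
end

section
/- Let n ≥ 2, let a = (a_1, …, a_n) ∈ ℝ^n have components linearly independent over ℚ, let F be a real algebraic number field of degree n, and suppose a is F-algebraic. Let C be an n×n integer matrix with nonzero determinant and define d = (d_1, …, d_n) by d_i = Σ_{j=1}^n C_{ij}·a_j. If M(d) ⊆ M(a), then the components of d are linearly independent over ℚ, d is F-algebraic, and M(d) has finite index in M(a): there exist finitely many elements s_1, …, s_m ∈ M(a) such that every α ∈ M(a) equals s_i·β for some i and some β ∈ M(d). -/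
open Matrix

section AuxLemmas

variable {n : ℕ}

/-- The integer matrix realizing a multiplier is uniquely determined,
by linear independence of the components of `a` over `ℚ`. -/
private lemma matrix_unique_aux (a : Fin n → ℝ) (ha : LinearIndependent ℚ a)
    (B B' : Matrix (Fin n) (Fin n) ℤ)
    (h : ∀ i, ∑ j, (B i j : ℝ) * a j = ∑ j, (B' i j : ℝ) * a j) : B = B' := by
  ext i j
  have key := (Fintype.linearIndependent_iff.mp ha)
    (fun j => ((B i j - B' i j : ℤ) : ℚ)) ?_ j
  · have h1 : ((B i j - B' i j : ℤ) : ℚ) = 0 := key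
    have h2 : (B i j - B' i j : ℤ) = 0 := by exact_mod_cast h1
    omega
  · have h2 := h i
    simp only [Rat.smul_def]
    push_cast
    simp only [sub_mul, Finset.sum_sub_distrib, h2, sub_self]

/-- Elements of the multiplier set are nonzero. -/
private lemma multSet_ne_zero_aux (hn : 2 ≤ n) (a : Fin n → ℝ)
    (ha : LinearIndependent ℚ a) {α : ℝ} (hα : α ∈ MultSet a) : α ≠ 0 := by
  obtain ⟨B, hdet, hB⟩ := hα
  rintro rfl
  have hB0 : B = 0 := by
    apply matrix_unique_aux a ha B 0
    intro i
    simpa using (hB i).symm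
  rw [hB0] at hdet
  haveI : Nonempty (Fin n) := ⟨⟨0, by omega⟩⟩
  rw [Matrix.det_zero] at hdet
  omega

/-- The key construction: if `B ≡ B₀ (mod det C)` realize multipliers `α`, `α₀`
of `a`, then `C ⬝ (B₀⁻¹ B) ⬝ C⁻¹` is an integer matrix of determinant `±1`
realizing the multiplier `α₀⁻¹ α` of `d = C ⬝ a`. -/
private lemma key_lemma_aux (a : Fin n → ℝ)
    (C : Matrix (Fin n) (Fin n) ℤ) (hC : C.det ≠ 0)
    (d : Fin n → ℝ) (hd : ∀ i, d i = ∑ j, (C i j : ℝ) * a j)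
    {α α₀ : ℝ} (hα₀ : α₀ ≠ 0)
    (B B₀ : Matrix (Fin n) (Fin n) ℤ)
    (hB : B.det = 1 ∨ B.det = -1) (hB₀ : B₀.det = 1 ∨ B₀.det = -1)
    (hBa : ∀ i, α * a i = ∑ j, (B i j : ℝ) * a j)
    (hB₀a : ∀ i, α₀ * a i = ∑ j, (B₀ i j : ℝ) * a j)
    (hmod : ∀ i j, C.det ∣ (B i j - B₀ i j)) :
    α₀⁻¹ * α ∈ MultSet d := by
  haveI : Invertible B₀ := B₀.invertibleOfIsUnitDet (Int.isUnit_iff.mpr hB₀)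
  set B' : Matrix (Fin n) (Fin n) ℤ := ⅟B₀ * B with hB'def
  have hsubm : B' - 1 = ⅟B₀ * (B - B₀) := by rw [mul_sub, invOf_mul_self, hB'def]
  have hdvd : ∀ i j, C.det ∣ (B' - 1) i j := by
    intro i j
    rw [hsubm]
    simp only [Matrix.mul_apply]
    exact Finset.dvd_sum fun k _ => (hmod k j).mul_left _
  have hdvdN : ∀ i j, C.det ∣ (C * (B' - 1) * C.adjugate) i j := by
    intro i j
    rw [mul_assoc]
    simp only [Matrix.mul_apply]
    refine Finset.dvd_sum fun k _ => Dvd.dvd.mul_left ?_ _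
    exact Finset.dvd_sum fun l _ => (hdvd k l).mul_right _
  set G : Matrix (Fin n) (Fin n) ℤ :=
    Matrix.of (fun i j => (C * (B' - 1) * C.adjugate) i j / C.det) with hGdef
  have hG : C.det • G = C * (B' - 1) * C.adjugate := by
    ext i j
    simp only [Matrix.smul_apply, hGdef, Matrix.of_apply, smul_eq_mul]
    exact Int.mul_ediv_cancel' (hdvdN i j)
  set Bd : Matrix (Fin n) (Fin n) ℤ := 1 + G with hBddef
  have h1 : C * B' * C.adjugate = C.det • Bd := by
    have e1 : C * B' = C + C * (B' - 1) := by rw [mul_sub, mul_one]; abel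
    rw [e1, add_mul, Matrix.mul_adjugate, ← hG, hBddef, smul_add]
  have h2 : C.det • (C * B') = C.det • (Bd * C) := by
    have h2a : C * B' * (C.adjugate * C) = (C.det • Bd) * C := by rw [← mul_assoc, h1]
    rwa [Matrix.adjugate_mul, Matrix.mul_smul, mul_one, Matrix.smul_mul] at h2a
  have h3 : C * B' = Bd * C := by
    ext i j
    have h4 := congrFun (congrFun h2 i) j
    simp only [Matrix.smul_apply, smul_eq_mul] at h4
    exact mul_left_cancel₀ hC h4
  -- determinants
  have hdetinv : (⅟B₀).det * B₀.det = 1 := by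
    rw [← Matrix.det_mul, invOf_mul_self, Matrix.det_one]
  have hdetBd : Bd.det = B'.det := by
    have h5 := congrArg Matrix.det h3
    simp only [Matrix.det_mul] at h5
    exact (mul_left_cancel₀ hC (h5.trans (mul_comm Bd.det C.det))).symm
  have hdetB' : B'.det = 1 ∨ B'.det = -1 := by
    rw [hB'def, Matrix.det_mul]
    rcases hB₀ with h0 | h0 <;> rw [h0] at hdetinv <;> rcases hB with h | h <;> rw [h] <;>
      simp only [mul_one, mul_neg_one] at hdetinv ⊢ <;> omega
  -- pass to ℝ
  have mv : ∀ (M : Matrix (Fin n) (Fin n) ℤ) (v : Fin n → ℝ) (i : Fin n),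
      (M.map ((Int.castRingHom ℝ) : ℤ → ℝ)).mulVec v i = ∑ j, (M i j : ℝ) * v j := by
    intro M v i
    simp [Matrix.mulVec, dotProduct, Matrix.map_apply]
  have hmapmul : ∀ M N : Matrix (Fin n) (Fin n) ℤ,
      ((M * N).map ((Int.castRingHom ℝ) : ℤ → ℝ))
        = M.map ((Int.castRingHom ℝ) : ℤ → ℝ) * N.map ((Int.castRingHom ℝ) : ℤ → ℝ) :=
    fun M N => Matrix.map_mul
  have haB : (B.map ((Int.castRingHom ℝ) : ℤ → ℝ)).mulVec a = α • a := by
    funext i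
    rw [mv]
    simpa using (hBa i).symm
  have haB₀ : (B₀.map ((Int.castRingHom ℝ) : ℤ → ℝ)).mulVec a = α₀ • a := by
    funext i
    rw [mv]
    simpa using (hB₀a i).symm
  have hinv1 : ((⅟B₀).map ((Int.castRingHom ℝ) : ℤ → ℝ))
      * (B₀.map ((Int.castRingHom ℝ) : ℤ → ℝ)) = 1 := by
    rw [← hmapmul, invOf_mul_self]
    simp
  have hB₀inv : ((⅟B₀).map ((Int.castRingHom ℝ) : ℤ → ℝ)).mulVec a = α₀⁻¹ • a := by
    have h6 : ((⅟B₀).map ((Int.castRingHom ℝ) : ℤ → ℝ)).mulVec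
        ((B₀.map ((Int.castRingHom ℝ) : ℤ → ℝ)).mulVec a) = a := by
      rw [Matrix.mulVec_mulVec, hinv1, Matrix.one_mulVec]
    rw [haB₀, Matrix.mulVec_smul] at h6
    have h7 : ((⅟B₀).map ((Int.castRingHom ℝ) : ℤ → ℝ)).mulVec a
        = α₀⁻¹ • (α₀ • ((⅟B₀).map ((Int.castRingHom ℝ) : ℤ → ℝ)).mulVec a) := by
      rw [smul_smul, inv_mul_cancel₀ hα₀, one_smul]
    rw [h7, h6]
  have hdvec : d = (C.map ((Int.castRingHom ℝ) : ℤ → ℝ)).mulVec a := by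
    funext i
    rw [mv]
    exact hd i
  have hfinal : (Bd.map ((Int.castRingHom ℝ) : ℤ → ℝ)).mulVec d = (α₀⁻¹ * α) • d := by
    rw [hdvec, Matrix.mulVec_mulVec, ← hmapmul, ← h3, hB'def, hmapmul, hmapmul,
      ← Matrix.mulVec_mulVec, ← Matrix.mulVec_mulVec, haB,
      Matrix.mulVec_smul, hB₀inv, smul_smul, Matrix.mulVec_smul, mul_comm α α₀⁻¹]
  refine ⟨Bd, by rw [hdetBd]; exact hdetB', fun i => ?_⟩
  have h7 := congrFun hfinal i
  simp only [Pi.smul_apply, smul_eq_mul] at h7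
  rw [← h7, mv]

end AuxLemmas

/-- smooth semiconjugacy (encoded by an integer matrix `C` of
nonzero determinant, `d = C · a`) from an `F`-algebraic quasiperiodic flow,
together with `M(d) ⊆ M(a)`, makes `d` an `F`-algebraic quasiperiodic
frequency vector with `M(d)` of finite index in `M(a)`. -/
theorem semiconjugacy_falgebraic_finiteIndex {n : ℕ} (hn : 2 ≤ n)
    (a : Fin n → ℝ) (ha : LinearIndependent ℚ a) (F : Subfield ℝ)
    (hF : Module.finrank ℚ F = n) (halg : IsFAlgebraic F a)
    (C : Matrix (Fin n) (Fin n) ℤ) (hC : C.det ≠ 0)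
    (d : Fin n → ℝ) (hd : ∀ i, d i = ∑ j, (C i j : ℝ) * a j)
    (hsub : MultSet d ⊆ MultSet a) :
    LinearIndependent ℚ d ∧ IsFAlgebraic F d ∧
    ∃ m : ℕ, ∃ s : Fin m → ℝ, (∀ i, s i ∈ MultSet a) ∧
      ∀ α ∈ MultSet a, ∃ i : Fin m, ∃ β ∈ MultSet d, α = s i * β := by
  classical
  -- the rational matrix `C` has nonzero determinant
  have hCQdet : (C.map ((↑) : ℤ → ℚ)).det ≠ 0 := by
    have h0 : (C.map ((↑) : ℤ → ℚ)).det = ((C.det : ℚ)) := by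
      rw [show C.map ((↑) : ℤ → ℚ) = (Int.castRingHom ℚ).mapMatrix C from rfl,
        ← RingHom.map_det (Int.castRingHom ℚ) C]; rfl
    rw [h0]
    exact_mod_cast hC
  have hvec : ∀ q : Fin n → ℚ, (∀ j, ∑ i, q i * (C i j : ℚ) = 0) → q = 0 := by
    intro q hq
    have hq' : q ᵥ* (C.map ((↑) : ℤ → ℚ)) = 0 := by
      funext j
      simpa [Matrix.vecMul, dotProduct, Matrix.map_apply] using hq j
    have h1 : q ᵥ* ((C.map ((↑) : ℤ → ℚ)) * (C.map ((↑) : ℤ → ℚ))⁻¹)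
        = 0 ᵥ* (C.map ((↑) : ℤ → ℚ))⁻¹ := by
      rw [← Matrix.vecMul_vecMul, hq']
    rwa [Matrix.mul_nonsing_inv _ (isUnit_iff_ne_zero.mpr hCQdet), Matrix.vecMul_one,
      Matrix.zero_vecMul] at h1
  -- Part 1 : linear independence of `d`
  have hlid : LinearIndependent ℚ d := by
    rw [Fintype.linearIndependent_iff]
    intro q hq
    have hc : ∀ j, ∑ i, q i * (C i j : ℚ) = 0 := by
      apply Fintype.linearIndependent_iff.mp ha (fun j => ∑ i, q i * (C i j : ℚ))
      simp only [Rat.smul_def, hd, Finset.mul_sum] at hq ⊢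
      push_cast
      simp only [Finset.sum_mul]
      rw [Finset.sum_comm]
      rw [← hq]
      apply Finset.sum_congr rfl; intro i _
      apply Finset.sum_congr rfl; intro j _
      ring
    have := hvec q hc
    intro i; exact congrFun this i
  -- Part 2 : `d` is `F`-algebraic
  have halgd : IsFAlgebraic F d := by
    obtain ⟨θ, hθ, bas, hbas⟩ := halg
    haveI : Nonempty (Fin n) := ⟨⟨0, by omega⟩⟩
    have hli : LinearIndependent ℚ (fun i => ∑ j, ((C i j : ℚ)) • bas j) := by
      rw [Fintype.linearIndependent_iff]
      intro q hq
      have hc : ∀ j, ∑ i, q i * (C i j : ℚ) = 0 := by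
        apply Fintype.linearIndependent_iff.mp bas.linearIndependent
          (fun j => ∑ i, q i * (C i j : ℚ))
        simp only [Finset.smul_sum, smul_smul] at hq ⊢
        rw [Finset.sum_comm] at hq
        simpa only [Finset.sum_smul] using hq
      have := hvec q hc
      intro i; exact congrFun this i
    refine ⟨θ, hθ, basisOfLinearIndependentOfCardEqFinrank hli (by simp [hF]), fun i => ?_⟩
    rw [coe_basisOfLinearIndependentOfCardEqFinrank]
    have hc2 : ((∑ j, ((C i j : ℚ)) • bas j : F) : ℝ) = ∑ j, (C i j : ℝ) * (θ * a j) := by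
      push_cast
      apply Finset.sum_congr rfl; intro j _
      rw [Rat.smul_def]
      push_cast
      rw [hbas j]
    rw [hc2, hd i, Finset.mul_sum]
    apply Finset.sum_congr rfl; intro j _
    ring
  refine ⟨hlid, halgd, ?_⟩
  -- Part 3 : finite index
  set D := C.det.natAbs with hD
  haveI : NeZero D := ⟨Int.natAbs_ne_zero.mpr hC⟩
  set ψ : Matrix (Fin n) (Fin n) ℤ → Matrix (Fin n) (Fin n) (ZMod D) :=
    fun M => M.map ((↑) : ℤ → ZMod D) with hψdef
  set P : Matrix (Fin n) (Fin n) (ZMod D) → ℝ → Prop := fun M α =>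
    ∃ B : Matrix (Fin n) (Fin n) ℤ, (B.det = 1 ∨ B.det = -1) ∧
      (∀ i, α * a i = ∑ j, (B i j : ℝ) * a j) ∧ ψ B = M with hPdef
  have hone : (1 : ℝ) ∈ MultSet a := by
    refine ⟨1, Or.inl Matrix.det_one, fun i => ?_⟩
    simp [Matrix.one_apply, Finset.sum_ite_eq]
  have hP' : ∀ M, ∃ α : ℝ, α ∈ MultSet a ∧ (P M α ∨ ¬ ∃ β, P M β) := by
    intro M
    by_cases h : ∃ β, P M β
    · obtain ⟨β, hβ⟩ := h
      obtain ⟨B, h1, h2, h3⟩ := hβ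
      exact ⟨β, ⟨B, h1, h2⟩, Or.inl ⟨B, h1, h2, h3⟩⟩
    · exact ⟨1, hone, Or.inr h⟩
  refine ⟨Fintype.card (Matrix (Fin n) (Fin n) (ZMod D)),
    fun i => (hP' ((Fintype.equivFin (Matrix (Fin n) (Fin n) (ZMod D))).symm i)).choose,
    fun i => ((hP' _).choose_spec).1, ?_⟩
  intro α hα
  obtain ⟨B, hBdet, hBa⟩ := hα
  refine ⟨Fintype.equivFin _ (ψ B), ?_⟩
  simp only [Equiv.symm_apply_apply]
  obtain ⟨hmem, hPor⟩ := (hP' (ψ B)).choose_spec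
  set α₀ := (hP' (ψ B)).choose with hα₀def
  have hPα₀ : P (ψ B) α₀ := by
    rcases hPor with h | h
    · exact h
    · exact absurd ⟨α, B, hBdet, hBa, rfl⟩ h
  obtain ⟨B₀, hB₀det, hB₀a, hψeq⟩ := hPα₀
  have hα₀ne : α₀ ≠ 0 := multSet_ne_zero_aux hn a ha hmem
  have hmod : ∀ i j, C.det ∣ (B i j - B₀ i j) := by
    intro i j
    have hent : ((B₀ i j : ZMod D)) = (B i j : ZMod D) := by
      have := congrFun (congrFun hψeq i) j
      simpa [hψdef, Matrix.map_apply] using this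
    rw [ZMod.intCast_eq_intCast_iff] at hent
    exact Int.natAbs_dvd.mp hent.dvd
  have hβ : α₀⁻¹ * α ∈ MultSet d :=
    key_lemma_aux a C hC d hd hα₀ne B B₀ hBdet hB₀det hBa hB₀a hmod
  refine ⟨α₀⁻¹ * α, hβ, ?_⟩
  rw [← mul_assoc, mul_inv_cancel₀ hα₀ne, one_mul]
end

section
/- Let n ≥ 2, let a = (a_1, …, a_n) ∈ ℝ^n have components linearly independent over ℚ, let C be an n×n integer matrix with nonzero determinant, and define d = (d_1, …, d_n) by d_i = Σ_{j=1}^n C_{ij}·a_j. Then for every α ∈ M(a) there exists a positive integer k such that α^k ∈ M(d). -/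
open Matrix

/-- for `d = C · a` with `C` an integer matrix of nonzero
determinant, every multiplier of `a` has a positive power which is a
multiplier of `d`. -/
theorem multiplier_pow_mem_of_semiconjugacy {n : ℕ} (hn : 2 ≤ n)
    (a : Fin n → ℝ) (ha : LinearIndependent ℚ a)
    (C : Matrix (Fin n) (Fin n) ℤ) (hC : C.det ≠ 0)
    (d : Fin n → ℝ) (hd : ∀ i, d i = ∑ j, (C i j : ℝ) * a j) :
    ∀ α ∈ MultSet a, ∃ k : ℕ, 0 < k ∧ α ^ k ∈ MultSet d := by
  intro α hα
  obtain ⟨B, hBdet, hBa⟩ := hα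
  set fR : Matrix (Fin n) (Fin n) ℤ →+* Matrix (Fin n) (Fin n) ℝ :=
    (Int.castRingHom ℝ).mapMatrix with hfR
  have hmv : ∀ (M : Matrix (Fin n) (Fin n) ℤ) (v : Fin n → ℝ) (i : Fin n),
      (fR M).mulVec v i = ∑ j, (M i j : ℝ) * v j := by
    intro M v i
    simp [hfR, Matrix.mulVec, dotProduct, RingHom.mapMatrix_apply, Matrix.map_apply]
  have hBmv : (fR B).mulVec a = α • a := by
    funext i
    rw [hmv, Pi.smul_apply, smul_eq_mul]
    exact (hBa i).symm
  have hpow : ∀ k : ℕ, (fR (B ^ k)).mulVec a = α ^ k • a := by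
    intro k
    induction k with
    | zero => simp
    | succ k ih =>
      rw [pow_succ, _root_.map_mul, ← Matrix.mulVec_mulVec, hBmv, Matrix.mulVec_smul, ih,
        smul_smul, pow_succ, mul_comm]
  -- the modulus
  set m : ℕ := C.det.natAbs with hm
  have hm0 : m ≠ 0 := Int.natAbs_ne_zero.mpr hC
  haveI : NeZero m := ⟨hm0⟩
  set g : Matrix (Fin n) (Fin n) ℤ →+* Matrix (Fin n) (Fin n) (ZMod m) :=
    (Int.castRingHom (ZMod m)).mapMatrix with hg
  have hgu : IsUnit (g B) := by
    rw [Matrix.isUnit_iff_isUnit_det]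
    have : (g B).det = ((B.det : ℤ) : ZMod m) := by
      rw [hg, ← RingHom.map_det]
      rfl
    rw [this]
    rcases hBdet with h | h <;> rw [h] <;> simp
  obtain ⟨u, hu⟩ := hgu
  set k : ℕ := orderOf u with hk
  have hkpos : 0 < k := orderOf_pos u
  have hgBk : g (B ^ k) = 1 := by
    rw [map_pow, ← hu, ← Units.val_pow_eq_pow_val, pow_orderOf_eq_one, Units.val_one]
  -- divisibility of entries of B^k - 1
  have hdvd1 : ∀ i j, C.det ∣ (B ^ k - 1) i j := by
    intro i j
    have h0 : (((B ^ k - 1) i j : ℤ) : ZMod m) = 0 := by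
      have : g (B ^ k - 1) = 0 := by rw [map_sub, hgBk, _root_.map_one, sub_self]
      have h2 := congrFun (congrFun this i) j
      simpa [hg, RingHom.mapMatrix_apply, Matrix.map_apply] using h2
    rw [ZMod.intCast_zmod_eq_zero_iff_dvd] at h0
    exact (Int.natAbs_dvd).mp h0
  have hdvd2 : ∀ i j, C.det ∣ (C * B ^ k * C.adjugate) i j := by
    intro i j
    have hsplit : C * B ^ k * C.adjugate
        = C * (B ^ k - 1) * C.adjugate + C.det • (1 : Matrix (Fin n) (Fin n) ℤ) := by
      rw [mul_sub, mul_one, sub_mul, Matrix.mul_adjugate]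
      abel
    rw [hsplit]
    apply dvd_add
    · rw [Matrix.mul_apply]
      apply Finset.dvd_sum
      intro t _
      rw [Matrix.mul_apply]
      rw [Finset.sum_mul]
      apply Finset.dvd_sum
      intro l _
      exact Dvd.dvd.mul_right (Dvd.dvd.mul_left (hdvd1 l t) _) _
    · rw [Matrix.smul_apply, Matrix.one_apply]
      by_cases h : i = j <;> simp [h]
  set B' : Matrix (Fin n) (Fin n) ℤ :=
    Matrix.of fun i j => (C * B ^ k * C.adjugate) i j / C.det with hB'
  have hB'eq : C.det • B' = C * B ^ k * C.adjugate := by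
    ext i j
    rw [Matrix.smul_apply, hB', Matrix.of_apply, smul_eq_mul]
    exact Int.mul_ediv_cancel' (hdvd2 i j)
  have hcomm : B' * C = C * B ^ k := by
    have h1 : C.det • (B' * C) = C.det • (C * B ^ k) := by
      rw [← Matrix.smul_mul, hB'eq, mul_assoc, Matrix.adjugate_mul, Matrix.mul_smul, mul_one]
    ext i j
    have h2 := congrFun (congrFun h1 i) j
    rw [Matrix.smul_apply, Matrix.smul_apply, smul_eq_mul, smul_eq_mul] at h2
    exact mul_left_cancel₀ hC h2
  have hdetB' : B'.det = B.det ^ k := by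
    have h1 : (C.det • B').det = C.det ^ n * B'.det := by
      rw [Matrix.det_smul, Fintype.card_fin]
    have h2 : (C * B ^ k * C.adjugate).det = C.det ^ n * B.det ^ k := by
      rw [Matrix.det_mul, Matrix.det_mul, Matrix.det_adjugate, Matrix.det_pow,
        Fintype.card_fin]
      have hn1 : C.det ^ n = C.det * C.det ^ (n - 1) := by
        rw [← pow_succ']
        congr 1
        omega
      rw [hn1]
      ring
    rw [hB'eq, h2] at h1
    exact (mul_left_cancel₀ (pow_ne_zero n hC) h1.symm)
  refine ⟨k, hkpos, B', ?_, ?_⟩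
  · rw [hdetB']
    rcases hBdet with h | h
    · left; rw [h, one_pow]
    · rcases Nat.even_or_odd k with he | ho
      · left; rw [h]; exact he.neg_one_pow
      · right; rw [h]; exact ho.neg_one_pow
  · intro i
    have hdv : d = (fR C).mulVec a := by
      funext i
      rw [hmv]
      exact hd i
    have key : (fR B').mulVec d = α ^ k • d := by
      rw [hdv, Matrix.mulVec_mulVec, ← _root_.map_mul fR, hcomm, _root_.map_mul, ← Matrix.mulVec_mulVec,
        hpow, Matrix.mulVec_smul]
    have h3 := congrFun key i
    rw [hmv, Pi.smul_apply, smul_eq_mul] at h3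
    exact h3.symm
end

section
/- Let n ≥ 2, let γ ∈ ℝ be transcendental over ℚ, and let C be an invertible n×n matrix with rational entries. Define a = (a_1, …, a_n) by a_i = Σ_{j=1}^n C_{ij}·γ^j. Then the components of a are linearly independent over ℚ, a is transcendental (not F-algebraic for any real algebraic number field F of degree n), and M(a) = {1, −1}. -/
open Matrix
open Polynomial

private lemma aux_pows {γ : ℝ} (hγ : Transcendental ℚ γ) {m : ℕ} (e : Fin m → ℕ)
    (he : Function.Injective e) (c : Fin m → ℚ)
    (h : ∑ k, (c k : ℝ) * γ ^ (e k) = 0) : ∀ k, c k = 0 := by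
  set P : ℚ[X] := ∑ k, Polynomial.monomial (e k) (c k) with hP
  have hev : Polynomial.aeval γ P = 0 := by
    simp only [hP, map_sum, Polynomial.aeval_monomial]
    simpa using h
  have hP0 : P = 0 := by
    by_contra h0
    exact hγ ⟨P, h0, hev⟩
  intro k
  have h2 := congrArg (fun Q => Polynomial.coeff Q (e k)) hP0
  simp only [hP, Polynomial.finset_sum_coeff, Polynomial.coeff_monomial,
    Polynomial.coeff_zero] at h2
  rw [Finset.sum_eq_single k] at h2
  · simpa using h2
  · intro b _ hb
    simp [he.ne hb]
  · simp


private lemma part1 {n : ℕ} (hn : 2 ≤ n) (γ : ℝ)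
    (hγ : Transcendental ℚ γ)
    (C : Matrix (Fin n) (Fin n) ℚ) (hC : C.det ≠ 0)
    (a : Fin n → ℝ) (ha : ∀ i, a i = ∑ j, (C i j : ℝ) * γ ^ ((j : ℕ) + 1)) :
    LinearIndependent ℚ a := by
  have hCu : IsUnit C.det := isUnit_iff_ne_zero.mpr hC
  rw [Fintype.linearIndependent_iff]
  intro gc hgc
  have h0 : ∑ j, ((Matrix.vecMul gc C j : ℚ) : ℝ) * γ ^ ((j : ℕ) + 1) = 0 := by
    rw [← hgc]
    simp only [ha, Matrix.vecMul, dotProduct, smul_eq_mul, Finset.mul_sum]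
    push_cast
    simp only [Finset.sum_mul]
    rw [Finset.sum_comm]
    apply Finset.sum_congr rfl
    intro j _
    rw [Finset.smul_sum]
    apply Finset.sum_congr rfl
    intro i _
    rw [Rat.smul_def]
    push_cast
    ring
  have hv := aux_pows hγ (fun j : Fin n => (j : ℕ) + 1)
    (fun x y h => Fin.val_injective (Nat.succ_injective h)) _ h0
  have hv' : Matrix.vecMul gc C = 0 := funext hv
  have h2 : Matrix.vecMul (Matrix.vecMul gc C) C⁻¹ = 0 := by
    rw [hv', Matrix.zero_vecMul]
  rw [Matrix.vecMul_vecMul, Matrix.mul_nonsing_inv C hCu, Matrix.vecMul_one] at h2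
  exact fun i => congrFun h2 i

private lemma part2 {n : ℕ} (hn : 2 ≤ n) (γ : ℝ)
    (hγ : Transcendental ℚ γ)
    (C : Matrix (Fin n) (Fin n) ℚ) (hC : C.det ≠ 0)
    (a : Fin n → ℝ) (ha : ∀ i, a i = ∑ j, (C i j : ℝ) * γ ^ ((j : ℕ) + 1))
    (F : Subfield ℝ) (hF : Module.finrank ℚ F = n) : ¬ (∃ θ : ℝ, θ ≠ 0 ∧ ∃ bas : Module.Basis (Fin n) ℚ F, ∀ i, (bas i : ℝ) = θ * a i) := by
  have hCu : IsUnit C.det := isUnit_iff_ne_zero.mpr hC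
  have hγ0 : γ ≠ 0 := by
    intro h; apply hγ; rw [h]; exact isAlgebraic_zero
  rintro ⟨θ, hθ, bas, hbas⟩
  -- the coercion as a ℚ-linear map
  let ℓ : F →ₗ[ℚ] ℝ :=
    { toFun := fun x => (x : ℝ)
      map_add' := fun x y => rfl
      map_smul' := by
        intro q x
        simp [Rat.smul_def] }
  have hℓinj : Function.Injective ℓ := fun x y h => Subtype.ext h
  -- γ powers in terms of a
  have hg : ∀ j : Fin n, γ ^ ((j : ℕ) + 1) = ∑ i, ((C⁻¹ j i : ℚ) : ℝ) * a i := by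
    have hmul : ((C⁻¹).map (Rat.cast : ℚ → ℝ)) * (C.map (Rat.cast : ℚ → ℝ)) = 1 := by
      rw [show (Rat.cast : ℚ → ℝ) = ⇑(Rat.castHom ℝ) from rfl, ← Matrix.map_mul,
        Matrix.nonsing_inv_mul C hCu]
      simp
    have hav : a = (C.map (Rat.cast : ℚ → ℝ)).mulVec (fun j => γ ^ ((j : ℕ) + 1)) := by
      funext i
      simp [Matrix.mulVec, dotProduct, ha, Matrix.map_apply]
    intro j
    have := congrFun (congrArg (fun v => ((C⁻¹).map (Rat.cast : ℚ → ℝ)).mulVec v) hav) j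
    simp only [Matrix.mulVec_mulVec, hmul, Matrix.one_mulVec] at this
    rw [← this]
    simp [Matrix.mulVec, dotProduct, Matrix.map_apply]
  -- elements θ γ^(j+1) in F
  let x : Fin n → F := fun j => ∑ i, C⁻¹ j i • bas i
  have hx : ∀ j, (x j : ℝ) = θ * γ ^ ((j : ℕ) + 1) := by
    intro j
    have : (x j : ℝ) = ℓ (x j) := rfl
    rw [this]
    simp only [x, map_sum, _root_.map_smul]
    rw [hg j, Finset.mul_sum]
    apply Finset.sum_congr rfl
    intro i _
    have hbi : ℓ (bas i) = θ * a i := hbas i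
    rw [Rat.smul_def, hbi]
    push_cast
    ring
  -- θ itself in F
  let j0 : Fin n := ⟨0, by omega⟩
  let j1 : Fin n := ⟨1, by omega⟩
  have hx0 : (x j0 : ℝ) = θ * γ ^ 1 := hx j0
  have hx1 : (x j1 : ℝ) = θ * γ ^ 2 := hx j1
  let tθ : F := x j0 * x j0 / x j1
  have htθ : (tθ : ℝ) = θ := by
    have : (tθ : ℝ) = (x j0 : ℝ) * (x j0 : ℝ) / (x j1 : ℝ) := by
      push_cast [tθ]; ring
    rw [this, hx0, hx1]
    field_simp
  -- the family θ * γ^k for k = 0, ..., n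
  let v : Fin (n + 1) → F := Fin.cons tθ x
  have hv : ∀ k : Fin (n + 1), (v k : ℝ) = θ * γ ^ (k : ℕ) := by
    intro k
    refine Fin.cases ?_ ?_ k
    · simpa [v] using htθ
    · intro i
      simpa [v] using hx i
  have hvLI : LinearIndependent ℚ v := by
    apply LinearIndependent.of_comp ℓ
    rw [Fintype.linearIndependent_iff]
    intro gc hgc
    have h0 : ∑ k : Fin (n + 1), (gc k : ℝ) * γ ^ (k : ℕ) = 0 := by
      have h1 : ∑ k : Fin (n + 1), (gc k : ℝ) * (θ * γ ^ (k : ℕ)) = 0 := by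
        rw [← hgc]
        apply Finset.sum_congr rfl
        intro k _
        have : ℓ (v k) = θ * γ ^ (k : ℕ) := hv k
        rw [Function.comp_apply, Rat.smul_def, this]
      have h2 : θ * ∑ k : Fin (n + 1), (gc k : ℝ) * γ ^ (k : ℕ) = 0 := by
        rw [Finset.mul_sum, ← h1]
        apply Finset.sum_congr rfl
        intro k _
        ring
      rcases mul_eq_zero.mp h2 with h | h
      · exact absurd h hθ
      · exact h
    exact aux_pows hγ (fun k : Fin (n + 1) => (k : ℕ)) Fin.val_injective gc h0
  have hfin : Module.Finite ℚ F := by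
    apply Module.finite_of_finrank_pos
    rw [hF]; omega
  have hcard := hvLI.fintype_card_le_finrank
  rw [hF, Fintype.card_fin] at hcard
  omega

private lemma part3 {n : ℕ} (hn : 2 ≤ n) (γ : ℝ)
    (hγ : Transcendental ℚ γ)
    (C : Matrix (Fin n) (Fin n) ℚ) (hC : C.det ≠ 0)
    (a : Fin n → ℝ) (ha : ∀ i, a i = ∑ j, (C i j : ℝ) * γ ^ ((j : ℕ) + 1)) :
    MultSet a = {1, -1} := by
  have hCu : IsUnit C.det := isUnit_iff_ne_zero.mpr hC
  have hγ0 : γ ≠ 0 := by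
    intro h; apply hγ; rw [h]; exact isAlgebraic_zero
  set g : Fin n → ℝ := fun j => γ ^ ((j : ℕ) + 1) with hgdef
  set Cr : Matrix (Fin n) (Fin n) ℝ := C.map (Rat.cast : ℚ → ℝ) with hCrdef
  set Er : Matrix (Fin n) (Fin n) ℝ := (C⁻¹).map (Rat.cast : ℚ → ℝ) with hErdef
  have hcast : (Rat.cast : ℚ → ℝ) = ⇑(Rat.castHom ℝ) := rfl
  have hEC : Er * Cr = 1 := by
    rw [hErdef, hCrdef, hcast, ← Matrix.map_mul, Matrix.nonsing_inv_mul C hCu]; simp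
  have hav : a = Cr.mulVec g := by
    funext i
    simp [Matrix.mulVec, dotProduct, ha, hCrdef, Matrix.map_apply, hgdef]
  have hCinj : ∀ v w : Fin n → ℝ, Cr.mulVec v = Cr.mulVec w → v = w := by
    intro v w h
    have := congrArg (fun u => Er.mulVec u) h
    simpa [Matrix.mulVec_mulVec, hEC, Matrix.one_mulVec] using this
  ext α
  constructor
  · rintro ⟨B, hdet, heq⟩
    set Bq : Matrix (Fin n) (Fin n) ℚ := B.map (Int.cast : ℤ → ℚ) with hBqdef
    set D : Matrix (Fin n) (Fin n) ℚ := C⁻¹ * Bq * C with hDdef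
    set Dr : Matrix (Fin n) (Fin n) ℝ := D.map (Rat.cast : ℚ → ℝ) with hDrdef
    have hBr : Bq.map (Rat.cast : ℚ → ℝ) = B.map (Int.cast : ℤ → ℝ) := by
      rw [hBqdef, Matrix.map_map]
      congr 1
    have haB : α • a = (B.map (Int.cast : ℤ → ℝ)).mulVec a := by
      funext i
      simp only [Pi.smul_apply, smul_eq_mul, Matrix.mulVec, dotProduct,
        Matrix.map_apply]
      exact heq i
    -- key relation
    have hαg : α • g = Dr.mulVec g := by
      apply hCinj
      rw [Matrix.mulVec_smul, ← hav, Matrix.mulVec_mulVec]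
      have hCD : Cr * Dr = (B.map (Int.cast : ℤ → ℝ)) * Cr := by
        rw [hCrdef, hDrdef, hcast, ← Matrix.map_mul]
        have h5 : C * D = Bq * C := by
          rw [hDdef, ← Matrix.mul_assoc, ← Matrix.mul_assoc,
            Matrix.mul_nonsing_inv C hCu, Matrix.one_mul]
        rw [h5, Matrix.map_mul, ← hcast, hBr]
      rw [hCD, ← Matrix.mulVec_mulVec, ← hav, ← haB]
    -- powers
    have hpow : ∀ m : ℕ, (α ^ m) • g = ((D ^ m).map (Rat.cast : ℚ → ℝ)).mulVec g := by
      intro m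
      induction m with
      | zero => simp [Matrix.one_mulVec]
      | succ m ih =>
        have hmap : (D ^ (m + 1)).map (Rat.cast : ℚ → ℝ)
            = (D ^ m).map (Rat.cast : ℚ → ℝ) * Dr := by
          rw [pow_succ, hcast, Matrix.map_mul, ← hcast, hDrdef]
        rw [hmap, ← Matrix.mulVec_mulVec, ← hαg, Matrix.mulVec_smul, ← ih,
          pow_succ, mul_smul]
        exact smul_comm _ _ _
    let z : Fin n := ⟨0, by omega⟩
    have hz0 : (z : ℕ) = 0 := rfl
    -- α * γ = ∑ j, D z j γ^(j+1)
    have hDz : ∀ (M : Matrix (Fin n) (Fin n) ℚ) (β : ℝ) (i : Fin n),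
        β • g = (M.map (Rat.cast : ℚ → ℝ)).mulVec g →
        β * γ ^ ((i : ℕ) + 1) = ∑ j, ((M i j : ℚ) : ℝ) * γ ^ ((j : ℕ) + 1) := by
      intro M β i hM
      have := congrFun hM i
      simpa [Matrix.mulVec, dotProduct, Matrix.map_apply, hgdef] using this
    have h1 : α * γ ^ 1 = ∑ j, ((D z j : ℚ) : ℝ) * γ ^ ((j : ℕ) + 1) := by
      have := hDz D α z (by simpa using hαg)
      rwa [hz0] at this
    set p : ℚ[X] := ∑ j : Fin n, Polynomial.monomial (j : ℕ) (D z j) with hpdef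
    have hp : Polynomial.aeval γ p = α := by
      have h2 : (Polynomial.aeval γ p) * γ = α * γ := by
        rw [hpdef]
        simp only [map_sum, Polynomial.aeval_monomial, eq_ratCast]
        rw [pow_one] at h1
        rw [h1, Finset.sum_mul]
        apply Finset.sum_congr rfl
        intro j _
        rw [pow_succ]
        ring
      exact mul_right_cancel₀ hγ0 h2
    set q : ℚ[X] := ∑ j : Fin n, Polynomial.monomial ((j : ℕ) + 1) ((D ^ (n + 1)) z j)
      with hqdef
    have hq : Polynomial.aeval γ q = α ^ (n + 1) * γ := by
      have h1 : α ^ (n + 1) * γ ^ 1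
          = ∑ j, (((D ^ (n + 1)) z j : ℚ) : ℝ) * γ ^ ((j : ℕ) + 1) := by
        have := hDz (D ^ (n + 1)) (α ^ (n + 1)) z (hpow (n + 1))
        rwa [hz0] at this
      rw [hqdef]
      simp only [map_sum, Polynomial.aeval_monomial, eq_ratCast]
      rw [pow_one] at h1
      rw [← h1]
    have hpq : p ^ (n + 1) * Polynomial.X = q := by
      apply transcendental_iff_injective.mp hγ
      rw [_root_.map_mul, map_pow, hp, Polynomial.aeval_X, hq]
    have hqdeg : q.natDegree ≤ n := by
      rw [hqdef]
      apply Polynomial.natDegree_le_iff_coeff_eq_zero.mpr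
      intro m hm
      rw [Polynomial.finset_sum_coeff]
      apply Finset.sum_eq_zero
      intro j _
      rw [Polynomial.coeff_monomial]
      have hj : (j : ℕ) + 1 ≠ m := by have := j.isLt; omega
      simp [hj]
    -- α is rational
    obtain ⟨r, hr⟩ : ∃ r : ℚ, α = (r : ℝ) := by
      rcases eq_or_ne p 0 with h0 | h0
      · exact ⟨0, by rw [← hp, h0]; simp⟩
      · have hdeg : (p ^ (n + 1) * Polynomial.X).natDegree = (n + 1) * p.natDegree + 1 := by
          rw [Polynomial.natDegree_mul (pow_ne_zero _ h0) Polynomial.X_ne_zero,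
            Polynomial.natDegree_pow, Polynomial.natDegree_X]
        rw [hpq] at hdeg
        have hle : (n + 1) * p.natDegree + 1 ≤ n := hdeg ▸ hqdeg
        have hd0 : p.natDegree = 0 := by
          by_contra hd
          have h1 : 1 ≤ p.natDegree := Nat.one_le_iff_ne_zero.mpr hd
          have h2 : (n + 1) * 1 ≤ (n + 1) * p.natDegree := Nat.mul_le_mul_left _ h1
          omega
        refine ⟨p.coeff 0, ?_⟩
        rw [← hp, Polynomial.eq_C_of_natDegree_eq_zero hd0]
        simp
    -- D = r • 1
    have hD : D = r • (1 : Matrix (Fin n) (Fin n) ℚ) := by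
      funext i j
      have h1i : α * γ ^ ((i : ℕ) + 1) = ∑ j, ((D i j : ℚ) : ℝ) * γ ^ ((j : ℕ) + 1) :=
        hDz D α i (by simpa using hαg)
      have h2 : ∑ jj, (((r • (1 : Matrix (Fin n) (Fin n) ℚ)) i jj : ℚ) : ℝ) * γ ^ ((jj : ℕ) + 1)
          = α * γ ^ ((i : ℕ) + 1) := by
        rw [hr]
        rw [Finset.sum_eq_single i]
        · simp [Matrix.smul_apply, Matrix.one_apply]
        · intro b _ hb
          simp [Matrix.smul_apply, Matrix.one_apply, Ne.symm hb]
        · simp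
      have h0 : ∑ jj, (((r • (1 : Matrix (Fin n) (Fin n) ℚ) - D) i jj : ℚ) : ℝ)
          * γ ^ ((jj : ℕ) + 1) = 0 := by
        have hsplit : ∀ jj : Fin n, (((r • (1 : Matrix (Fin n) (Fin n) ℚ) - D) i jj : ℚ) : ℝ)
            * γ ^ ((jj : ℕ) + 1)
            = (((r • (1 : Matrix (Fin n) (Fin n) ℚ)) i jj : ℚ) : ℝ) * γ ^ ((jj : ℕ) + 1)
              - ((D i jj : ℚ) : ℝ) * γ ^ ((jj : ℕ) + 1) := by
          intro jj
          push_cast [Matrix.sub_apply]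
          ring
        rw [Finset.sum_congr rfl (fun jj _ => hsplit jj), Finset.sum_sub_distrib, h2, h1i,
          sub_self]
      have h3 := aux_pows hγ (fun j : Fin n => (j : ℕ) + 1)
        (fun x y h => Fin.val_injective (Nat.succ_injective h)) _ h0 j
      have h4 : (r • (1 : Matrix (Fin n) (Fin n) ℚ)) i j - D i j = 0 := h3
      have h5 : D i j = (r • (1 : Matrix (Fin n) (Fin n) ℚ)) i j := by linarith
      rw [h5]
    -- determinants
    have hdetD : D.det = (B.det : ℚ) := by
      have hBqdet : Bq.det = (B.det : ℚ) := by
        have h5 := RingHom.map_det (Int.castRingHom ℚ) B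
        simp only [RingHom.mapMatrix_apply, Int.coe_castRingHom] at h5
        rw [hBqdef, ← h5]
      rw [hDdef, Matrix.det_mul, Matrix.det_mul, Matrix.det_nonsing_inv, hBqdet,
        Ring.inverse_eq_inv']
      field_simp
    have hrn : r ^ n = 1 ∨ r ^ n = -1 := by
      rw [hD, Matrix.det_smul, Matrix.det_one, Fintype.card_fin, mul_one] at hdetD
      rcases hdet with h | h
      · left; rw [hdetD, h]; norm_num
      · right; rw [hdetD, h]; norm_num
    have habs : |r| = 1 := by
      have h1 : |r| ^ n = 1 := by
        rw [← abs_pow]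
        rcases hrn with h | h <;> rw [h] <;> norm_num
      rcases lt_trichotomy |r| 1 with h | h | h
      · have h2 := pow_lt_one₀ (abs_nonneg r) h (show n ≠ 0 by omega)
        rw [h1] at h2; norm_num at h2
      · exact h
      · have h2 := one_lt_pow₀ h (show n ≠ 0 by omega)
        rw [h1] at h2; norm_num at h2
    rcases (abs_eq (by norm_num : (0:ℚ) ≤ 1)).mp habs with h | h
    · left; rw [hr, h]; norm_num
    · right; rw [hr, h]
      simp
  · intro hα
    rcases hα with h | h
    · refine ⟨1, Or.inl Matrix.det_one, ?_⟩
      intro i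
      rw [h]
      rw [Finset.sum_eq_single i]
      · simp [Matrix.one_apply]
      · intro b _ hb
        simp [Matrix.one_apply, Ne.symm hb]
      · simp
    · rw [Set.mem_singleton_iff] at h
      refine ⟨-1, ?_, ?_⟩
      · rw [Matrix.det_neg, Matrix.det_one, Fintype.card_fin, mul_one]
        rcases Nat.even_or_odd n with he | ho
        · left; exact Even.neg_one_pow he
        · right; exact Odd.neg_one_pow ho
      · intro i
        rw [h]
        rw [Finset.sum_eq_single i]
        · simp [Matrix.neg_apply, Matrix.one_apply]
        · intro b _ hb
          simp [Matrix.neg_apply, Matrix.one_apply, Ne.symm hb]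
        · simp

/-- for `γ` transcendental and `C` an invertible rational
matrix, the vector `a` with `a i = ∑ j, C i j * γ ^ (j+1)` has `ℚ`-linearly
independent components, is transcendental, and has multiplier set `{1, -1}`. -/
theorem transcendental_flow_example {n : ℕ} (hn : 2 ≤ n) (γ : ℝ)
    (hγ : Transcendental ℚ γ)
    (C : Matrix (Fin n) (Fin n) ℚ) (hC : C.det ≠ 0)
    (a : Fin n → ℝ) (ha : ∀ i, a i = ∑ j, (C i j : ℝ) * γ ^ ((j : ℕ) + 1)) :
    LinearIndependent ℚ a ∧
    (∀ F : Subfield ℝ, Module.finrank ℚ F = n → ¬ IsFAlgebraic F a) ∧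
    MultSet a = {1, -1} := by
  refine ⟨part1 hn γ hγ C hC a ha, ?_, part3 hn γ hγ C hC a ha⟩
  intro F hF hFA
  exact part2 hn γ hγ C hC a ha F hF hFA
end

section
/- Let a = (1, 4√3) ∈ ℝ². Then 1 and 4√3 are linearly independent over ℚ, (2+√3)² = 7+4√3 belongs to M(a) (witnessed by the integer matrix [[7, 1], [48, 7]], which has determinant 1), 2+√3 does not belong to M(a), and in fact M(a) = {ε·(2+√3)^{2k} : ε ∈ {1, −1}, k ∈ ℤ}. -/
open Matrix

lemma sqrt3_irr : Irrational (Real.sqrt 3) := by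
  have : Real.sqrt 3 = Real.sqrt (3:ℕ) := by norm_num
  rw [this, irrational_sqrt_natCast_iff]
  rintro ⟨r, hr⟩
  rcases Nat.lt_or_ge r 2 with h | h
  · interval_cases r <;> omega
  · nlinarith

lemma sqrt3_sq : Real.sqrt 3 ^ 2 = 3 := Real.sq_sqrt (by norm_num)

lemma sqrt3_lt_two : Real.sqrt 3 < 2 := by
  nlinarith [sqrt3_sq, Real.sqrt_nonneg 3]

lemma sqrt3_pos : 0 < Real.sqrt 3 := Real.sqrt_pos.mpr (by norm_num)

noncomputable def repq (p q : ℤ) : ℝ := p + 4 * q * Real.sqrt 3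

lemma repq_eq_zero {m n : ℤ} (h : (m : ℝ) + n * Real.sqrt 3 = 0) : m = 0 ∧ n = 0 := by
  rcases eq_or_ne n 0 with hn | hn
  · subst hn; simp at h; exact ⟨by exact_mod_cast h, rfl⟩
  · exfalso
    apply sqrt3_irr
    refine ⟨(-m : ℚ) / n, ?_⟩
    have hn' : (n : ℝ) ≠ 0 := Int.cast_ne_zero.mpr hn
    push_cast
    field_simp
    linarith

lemma repq_inj {p q r s : ℤ} (h : repq p q = repq r s) : p = r ∧ q = s := by
  have h0 : ((p - r : ℤ) : ℝ) + ((4*q - 4*s : ℤ) : ℝ) * Real.sqrt 3 = 0 := by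
    unfold repq at h; push_cast; linarith
  have := repq_eq_zero h0
  omega

lemma repq_mul (p q r s : ℤ) :
    repq p q * repq r s = repq (p*r + 48*q*s) (p*s + q*r) := by
  unfold repq
  push_cast
  linear_combination (16*(q:ℝ)*s) * sqrt3_sq

noncomputable def u : ℝ := 7 + 4 * Real.sqrt 3

lemma repq_71 : repq 7 1 = u := by unfold repq u; push_cast; ring

lemma one_lt_u : 1 < u := by unfold u; nlinarith [sqrt3_pos]

lemma u_pos : 0 < u := lt_trans one_pos one_lt_u

lemma repq_one : repq 1 0 = 1 := by unfold repq; push_cast; ring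

lemma norm_mul_self {p q : ℤ} (h : p^2 - 48*q^2 = 1) :
    repq p q * repq p (-q) = 1 := by
  rw [repq_mul, ← repq_one]
  congr 1 <;> [nlinarith; ring]

lemma repq_ne_zero {p q : ℤ} (h : p^2 - 48*q^2 = 1) : repq p q ≠ 0 := by
  intro h0
  have := norm_mul_self h
  rw [h0, zero_mul] at this
  norm_num at this

/-- powers of u and its conjugate, simultaneously -/
lemma pow_repq (n : ℕ) : ∃ p q : ℤ, p^2 - 48*q^2 = 1 ∧
    repq p q = u ^ n ∧ repq p (-q) = (repq 7 (-1)) ^ n := by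
  induction n with
  | zero => exact ⟨1, 0, by norm_num, by simp [repq_one], by simp [repq_one]⟩
  | succ n ih =>
    obtain ⟨p, q, hn, h1, h2⟩ := ih
    refine ⟨7*p + 48*q, p + 7*q, by nlinarith, ?_, ?_⟩
    · rw [pow_succ, ← h1, ← repq_71, repq_mul]; congr 1 <;> ring
    · rw [pow_succ, ← h2, repq_mul]; congr 1 <;> ring

lemma zpow_repq (k : ℤ) : ∃ p q : ℤ, p^2 - 48*q^2 = 1 ∧ repq p q = u ^ k := by
  rcases le_or_gt 0 k with hk | hk
  · obtain ⟨n, rfl⟩ := Int.eq_ofNat_of_zero_le hk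
    obtain ⟨p, q, h, h1, _⟩ := pow_repq n
    exact ⟨p, q, h, by rw [h1, zpow_natCast]⟩
  · obtain ⟨n, hn⟩ : ∃ n : ℕ, k = -(n : ℤ) := ⟨k.natAbs, by omega⟩
    obtain ⟨p, q, h, h1, h2⟩ := pow_repq n
    refine ⟨p, -q, by nlinarith, ?_⟩
    have huv : repq 7 1 * repq 7 (-1) = 1 := norm_mul_self (by norm_num)
    have hvn : repq p (-q) * repq p q = 1 := by
      have := norm_mul_self h
      linarith [this, mul_comm (repq p q) (repq p (-q))]
    rw [hn, _root_.zpow_neg, zpow_natCast, ← h1]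
    exact eq_inv_of_mul_eq_one_left hvn

lemma pell_class_pos {p q : ℤ} (h : p^2 - 48*q^2 = 1) (hpos : 0 < repq p q) :
    ∃ k : ℤ, repq p q = u ^ k := by
  obtain ⟨k, hk1, hk2⟩ := exists_mem_Ico_zpow hpos one_lt_u
  obtain ⟨r, s, hrs, hr⟩ := zpow_repq (-k)
  -- β := repq p q * u ^ (-k)
  set P : ℤ := p*r + 48*q*s with hP
  set Q : ℤ := p*s + q*r with hQ
  have hnorm : P^2 - 48*Q^2 = 1 := by
    rw [hP, hQ]; linear_combination (r^2 - 48*s^2)*h + hrs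
  have hukpos : (0:ℝ) < u ^ k := zpow_pos u_pos k
  have hβ : repq P Q = repq p q * u ^ (-k : ℤ) := by
    rw [← hr, repq_mul]
  have hβ1 : 1 ≤ repq P Q := by
    rw [hβ, _root_.zpow_neg, ← div_eq_mul_inv, le_div_iff₀ hukpos, one_mul]
    exact hk1
  have hβ2 : repq P Q < u := by
    rw [hβ, _root_.zpow_neg, ← div_eq_mul_inv, div_lt_iff₀ hukpos]
    calc repq p q < u ^ (k+1) := hk2
    _ = u * u ^ k := by rw [zpow_add_one₀ (ne_of_gt u_pos)]; ring
  have hconj : repq P Q * repq P (-Q) = 1 := norm_mul_self hnorm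
  have hβpos : (0:ℝ) < repq P Q := lt_of_lt_of_le one_pos hβ1
  have hcpos : (0:ℝ) < repq P (-Q) := by
    by_contra hc
    push_neg at hc
    nlinarith
  have hcle : repq P (-Q) ≤ 1 := by
    nlinarith
  -- bounds on P
  have hsum : repq P Q + repq P (-Q) = 2 * (P:ℝ) := by unfold repq; push_cast; ring
  have hdiff : repq P Q - repq P (-Q) = 8 * (Q:ℝ) * Real.sqrt 3 := by
    unfold repq; push_cast; ring
  have hu : u = 7 + 4 * Real.sqrt 3 := rfl
  have hPpos : 0 < P := by
    have hPr : (0:ℝ) < (P:ℝ) := by linarith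
    exact_mod_cast hPr
  have hPle : P ≤ 7 := by
    have hPr : (P:ℝ) < 8 := by nlinarith [sqrt3_lt_two]
    have h8 : P < 8 := by exact_mod_cast hPr
    omega
  have hQnn : 0 ≤ Q := by
    have hQr : (0:ℝ) ≤ (Q:ℝ) := by nlinarith [sqrt3_pos]
    exact_mod_cast hQr
  rcases eq_or_lt_of_le hQnn with hQ0 | hQ1
  · -- Q = 0, so P = 1, β = 1
    have hQ0' : Q = 0 := hQ0.symm
    have hP1 : P = 1 := by nlinarith [sq_nonneg (P - 1), sq_nonneg (P + 1)]
    have hβone : repq P Q = 1 := by rw [hP1, hQ0', repq_one]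
    refine ⟨k, ?_⟩
    have h1' : repq p q * (u ^ k)⁻¹ = 1 := by
      rw [← _root_.zpow_neg, ← hβ, hβone]
    field_simp at h1'
    exact h1'
  · -- Q ≥ 1 forces β = u, contradiction
    exfalso
    have hQ1' : 1 ≤ Q := hQ1
    have hQsq : 1 ≤ Q^2 := by nlinarith
    have h49 : 49 ≤ P^2 := by nlinarith
    have hP7 : P = 7 := by
      by_contra hne
      have h6 : P ≤ 6 := by omega
      nlinarith
    have hQe : Q = 1 := by
      by_contra hne
      have h2 : 2 ≤ Q := by omega
      nlinarith
    rw [hP7, hQe, repq_71] at hβ2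
    exact lt_irrefl _ hβ2

lemma mem_multset_iff {x : ℝ} :
    x ∈ MultSet ![(1 : ℝ), 4 * Real.sqrt 3] ↔
      ∃ p q : ℤ, p^2 - 48*q^2 = 1 ∧ x = repq p q := by
  constructor
  · rintro ⟨B, hdet, heq⟩
    have h0 := heq 0
    have h1 := heq 1
    simp [Fin.sum_univ_two] at h0 h1
    -- h0 : x = B 0 0 + B 0 1 * (4 * √3)
    -- h1 : x * (4 * √3) = B 1 0 + B 1 1 * (4 * √3)
    have key : ((48 * B 0 1 - B 1 0 : ℤ) : ℝ)
        + ((4 * B 0 0 - 4 * B 1 1 : ℤ) : ℝ) * Real.sqrt 3 = 0 := by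
      push_cast
      linear_combination h1 - (4*Real.sqrt 3) * h0 - (16*((B 0 1 : ℤ):ℝ))*sqrt3_sq
    obtain ⟨e1, e2⟩ := repq_eq_zero key
    have hB10 : B 1 0 = 48 * B 0 1 := by omega
    have hB11 : B 1 1 = B 0 0 := by omega
    rw [Matrix.det_fin_two, hB10, hB11] at hdet
    have hdet' : (B 0 0)^2 - 48 * (B 0 1)^2 = 1 := by
      rcases hdet with hd | hd
      · nlinarith
      · exfalso
        have hz : ((B 0 0 : ZMod 3))^2 - 48 * ((B 0 1 : ZMod 3))^2 = -1 := by
          have := congrArg (fun z : ℤ => (z : ZMod 3)) hd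
          push_cast at this
          convert this using 1 <;> push_cast <;> ring
        have h48 : (48 : ZMod 3) = 0 := by decide
        rw [h48, zero_mul, sub_zero] at hz
        have : ∀ z : ZMod 3, z^2 ≠ -1 := by decide
        exact this _ hz
    exact ⟨B 0 0, B 0 1, hdet', by rw [h0]; unfold repq; push_cast; ring⟩
  · rintro ⟨p, q, h, rfl⟩
    refine ⟨!![p, q; 48*q, p], Or.inl ?_, ?_⟩
    · rw [Matrix.det_fin_two_of]; nlinarith
    · intro i
      fin_cases i
      · simp [Fin.sum_univ_two, repq]; push_cast; ring
      · simp [Fin.sum_univ_two, repq]; push_cast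
        linear_combination (16*(q:ℝ))*sqrt3_sq

lemma u_eq : (2 + Real.sqrt 3) ^ 2 = u := by
  unfold u; linear_combination sqrt3_sq

lemma zpow2k (k : ℤ) : (2 + Real.sqrt 3) ^ (2 * k) = u ^ k := by
  rw [_root_.zpow_mul, ← u_eq]
  norm_cast

lemma part1_s15 : LinearIndependent ℚ ![(1 : ℝ), 4 * Real.sqrt 3] := by
  rw [LinearIndependent.pair_iff]
  intro s t hst
  rcases eq_or_ne t 0 with ht | ht
  · subst ht
    refine ⟨?_, rfl⟩
    simpa using hst
  · exfalso
    apply sqrt3_irr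
    refine ⟨-s / (4 * t), ?_⟩
    have ht' : ((t:ℝ)) ≠ 0 := by exact_mod_cast ht
    push_cast
    rw [Rat.smul_def, Rat.smul_def] at hst
    push_cast at hst
    field_simp
    linarith

lemma part4 : (2 + Real.sqrt 3) ∉ MultSet ![(1 : ℝ), 4 * Real.sqrt 3] := by
  rw [mem_multset_iff]
  rintro ⟨p, q, h, heq⟩
  have key : ((p - 2 : ℤ) : ℝ) + ((4*q - 1 : ℤ) : ℝ) * Real.sqrt 3 = 0 := by
    unfold repq at heq; push_cast; linarith
  have := repq_eq_zero key
  omega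

lemma part5 : MultSet ![(1 : ℝ), 4 * Real.sqrt 3]
      = {x : ℝ | ∃ ε : ℝ, (ε = 1 ∨ ε = -1) ∧
          ∃ k : ℤ, x = ε * (2 + Real.sqrt 3) ^ (2 * k)} := by
  ext x
  rw [mem_multset_iff]
  simp only [Set.mem_setOf_eq]
  constructor
  · rintro ⟨p, q, h, rfl⟩
    have hne : repq p q ≠ 0 := repq_ne_zero h
    rcases lt_or_gt_of_ne hne with hneg | hpos
    · have hpos' : 0 < repq (-p) (-q) := by
        have : repq (-p) (-q) = - repq p q := by unfold repq; push_cast; ring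
        rw [this]; linarith
      obtain ⟨k, hk⟩ := pell_class_pos (by nlinarith : (-p)^2 - 48*(-q)^2 = 1) hpos'
      refine ⟨-1, Or.inr rfl, k, ?_⟩
      rw [zpow2k, ← hk]
      unfold repq; push_cast; ring
    · obtain ⟨k, hk⟩ := pell_class_pos h hpos
      exact ⟨1, Or.inl rfl, k, by rw [zpow2k, ← hk, one_mul]⟩
  · rintro ⟨ε, hε, k, rfl⟩
    obtain ⟨p, q, h, hpq⟩ := zpow_repq k
    rcases hε with rfl | rfl
    · exact ⟨p, q, h, by rw [zpow2k, ← hpq, one_mul]⟩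
    · refine ⟨-p, -q, by nlinarith, ?_⟩
      rw [zpow2k, ← hpq]
      unfold repq; push_cast; ring

lemma part2_s15 : ∀ i, (2 + Real.sqrt 3) ^ 2 * (![(1 : ℝ), 4 * Real.sqrt 3]) i
    = ∑ j, ((!![7, 1; 48, 7] : Matrix (Fin 2) (Fin 2) ℤ) i j : ℝ)
        * (![(1 : ℝ), 4 * Real.sqrt 3]) j := by
  intro i
  rw [u_eq]
  fin_cases i
  · simp [Fin.sum_univ_two, u]
  · simp [Fin.sum_univ_two, u]
    linear_combination (16:ℝ)*sqrt3_sq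

lemma part3_s15 : (2 + Real.sqrt 3) ^ 2 ∈ MultSet ![(1 : ℝ), 4 * Real.sqrt 3] := by
  rw [mem_multset_iff]
  exact ⟨7, 1, by norm_num, by rw [u_eq, ← repq_71]⟩

/-- for `a = (1, 4√3)`: the components are `ℚ`-linearly
independent, `(2+√3)²` is a multiplier (witnessed by `[[7,1],[48,7]]` of
determinant `1`), `2+√3` is not, and
`M(a) = {±(2+√3)^(2k) : k ∈ ℤ}`. -/
theorem sqrt3_flow_example :
    LinearIndependent ℚ ![(1 : ℝ), 4 * Real.sqrt 3] ∧
    ((!![7, 1; 48, 7] : Matrix (Fin 2) (Fin 2) ℤ).det = 1 ∧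
      ∀ i, (2 + Real.sqrt 3) ^ 2 * (![(1 : ℝ), 4 * Real.sqrt 3]) i
        = ∑ j, ((!![7, 1; 48, 7] : Matrix (Fin 2) (Fin 2) ℤ) i j : ℝ)
            * (![(1 : ℝ), 4 * Real.sqrt 3]) j) ∧
    (2 + Real.sqrt 3) ^ 2 ∈ MultSet ![(1 : ℝ), 4 * Real.sqrt 3] ∧
    (2 + Real.sqrt 3) ∉ MultSet ![(1 : ℝ), 4 * Real.sqrt 3] ∧
    MultSet ![(1 : ℝ), 4 * Real.sqrt 3]
      = {x : ℝ | ∃ ε : ℝ, (ε = 1 ∨ ε = -1) ∧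
          ∃ k : ℤ, x = ε * (2 + Real.sqrt 3) ^ (2 * k)} := by
  refine ⟨part1_s15, ⟨by norm_num [Matrix.det_fin_two_of], part2_s15⟩, part3_s15, part4, part5⟩
end

section
/- Let a = (1, 4√3) ∈ ℝ² and d = (4, 60√3) ∈ ℝ², so that d = C·a for the integer matrix C = [[4, 0], [0, 15]] of nonzero determinant. Then (2+√3)³ belongs to M(d) (witnessed by the integer matrix [[26, 1], [675, 26]], which has determinant 1), neither 2+√3 nor (2+√3)² belongs to M(d), in fact M(d) = {ε·(2+√3)^{3k} : ε ∈ {1, −1}, k ∈ ℤ}, and (2+√3)³ does not belong to M(a); consequently M(d) is not a subset of M(a). -/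
open Matrix

namespace SemiconjAux

local notation "s" => Real.sqrt 3

abbrev h26 : 1 < 26 := by norm_num

lemma hs : s ^ 2 = 3 := Real.sq_sqrt (by norm_num)

lemma irr_s : Irrational s := (Nat.prime_three).irrational_sqrt

lemma coeff_unique {p q r t : ℤ} (h : (p:ℝ) + q * s = r + t * s) : p = r ∧ q = t := by
  by_cases hqt : q = t
  · subst hqt
    refine ⟨?_, rfl⟩
    have : (p:ℝ) = r := by linarith
    exact_mod_cast this
  · exfalso
    have hne : ((q - t : ℤ) : ℝ) ≠ 0 := by
      exact_mod_cast sub_ne_zero.mpr hqt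
    refine irr_s ⟨((r - p : ℤ) : ℚ) / ((q - t : ℤ) : ℚ), ?_⟩
    have hne' : ((q - t : ℤ) : ℚ) ≠ 0 := by exact_mod_cast sub_ne_zero.mpr hqt
    push_cast
    rw [div_eq_iff (by exact_mod_cast hne)]
    linarith

lemma pow_eq (n : ℕ) : (2 + s) ^ (3 * n)
    = (Pell.xn h26 n : ℝ) + 15 * (Pell.yn h26 n : ℝ) * s := by
  induction n with
  | zero => simp
  | succ n ih =>
    have hx : (Pell.xn h26 (n+1) : ℝ) = 26 * Pell.xn h26 n + 675 * Pell.yn h26 n := by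
      rw [show Pell.xn h26 (n+1) = Pell.xn h26 n * 26 + 675 * Pell.yn h26 n from rfl]
      push_cast; ring
    have hy : (Pell.yn h26 (n+1) : ℝ) = (Pell.xn h26 n : ℝ) + 26 * Pell.yn h26 n := by
      rw [show Pell.yn h26 (n+1) = Pell.xn h26 n + Pell.yn h26 n * 26 from rfl]
      push_cast; ring
    rw [show 3 * (n+1) = 3*n + 3 by ring, pow_add, ih, hx, hy]
    linear_combination (((Pell.xn h26 n : ℝ) + 15 * (Pell.yn h26 n : ℝ) * s) * (6 + s)
      + 225 * (Pell.yn h26 n : ℝ)) * hs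

lemma zpow_pos_eq (n : ℕ) : (2 + s) ^ (3 * (n:ℤ))
    = (Pell.xn h26 n : ℝ) + 15 * (Pell.yn h26 n : ℝ) * s := by
  rw [show (3 * (n:ℤ)) = ((3*n : ℕ) : ℤ) by push_cast; ring, zpow_natCast, pow_eq]

lemma pell_sq (n : ℕ) :
    (Pell.xn h26 n : ℤ) ^ 2 - 675 * (Pell.yn h26 n : ℤ) ^ 2 = 1 := by
  have h : (Pell.xn h26 n : ℤ) * (Pell.xn h26 n : ℤ)
      - 675 * (Pell.yn h26 n : ℤ) * (Pell.yn h26 n : ℤ) = 1 := Pell.pell_eqz h26 n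
  linear_combination h

lemma pell_sq_real (n : ℕ) :
    (Pell.xn h26 n : ℝ) ^ 2 - 675 * (Pell.yn h26 n : ℝ) ^ 2 = 1 := by
  exact_mod_cast pell_sq n

lemma zpow_neg_eq (n : ℕ) : (2 + s) ^ (3 * (-(n:ℤ)))
    = (Pell.xn h26 n : ℝ) - 15 * (Pell.yn h26 n : ℝ) * s := by
  rw [show (3 * (-(n:ℤ))) = -(3 * (n:ℤ)) by ring, _root_.zpow_neg, zpow_pos_eq]
  refine inv_eq_of_mul_eq_one_right ?_
  linear_combination pell_sq_real n - 225 * (Pell.yn h26 n : ℝ)^2 * hs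

/-- constructor for MultSet of d. -/
lemma mem_d (x y : ℤ) (h : x^2 - 675*y^2 = 1) :
    ((x:ℝ) + 15*(y:ℝ)*s) ∈ MultSet ![(4:ℝ), 60*s] := by
  refine ⟨!![x, y; 675*y, x], Or.inl ?_, ?_⟩
  · rw [Matrix.det_fin_two_of]; linear_combination h
  · intro i
    fin_cases i
    · show ((x:ℝ) + 15*(y:ℝ)*s) * 4
        = ∑ j, ((!![x, y; 675*y, x] : Matrix (Fin 2) (Fin 2) ℤ) 0 j : ℝ) * ![(4:ℝ), 60*s] j
      rw [Fin.sum_univ_two]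
      simp only [Matrix.cons_val_zero, Matrix.cons_val_one, Matrix.head_cons,
        Matrix.of_apply, Matrix.cons_val', Matrix.cons_val_fin_one, Matrix.empty_val', Matrix.vecHead, Matrix.vecTail]
      push_cast; ring
    · show ((x:ℝ) + 15*(y:ℝ)*s) * (60*s)
        = ∑ j, ((!![x, y; 675*y, x] : Matrix (Fin 2) (Fin 2) ℤ) 1 j : ℝ) * ![(4:ℝ), 60*s] j
      rw [Fin.sum_univ_two]
      simp only [Matrix.cons_val_zero, Matrix.cons_val_one, Matrix.head_cons,
        Matrix.of_apply, Matrix.cons_val', Matrix.cons_val_fin_one, Matrix.empty_val', Matrix.vecHead, Matrix.vecTail]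
      push_cast; linear_combination (900*(y:ℝ)) * hs

lemma mem_d_decomp {α : ℝ} (hα : α ∈ MultSet ![(4:ℝ), 60*s]) :
    ∃ x y : ℤ, x^2 - 675*y^2 = 1 ∧ α = x + 15*y*s := by
  obtain ⟨B, hdet, heq⟩ := hα
  have h0 := heq 0
  have h1 := heq 1
  simp only [Fin.sum_univ_two, Matrix.cons_val_zero, Matrix.cons_val_one,
    Matrix.head_cons, Fin.isValue] at h0 h1
  have hαv : α = (B 0 0 : ℝ) + 15 * (B 0 1 : ℝ) * s := by linear_combination h0 / 4
  rw [hαv] at h1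
  have key : ((2700 * B 0 1 : ℤ) : ℝ) + (60 * B 0 0 : ℤ) * s
      = ((4 * B 1 0 : ℤ) : ℝ) + (60 * B 1 1 : ℤ) * s := by
    push_cast
    linear_combination h1 - 900 * (B 0 1 : ℝ) * hs
  obtain ⟨e1, e2⟩ := coeff_unique key
  have hb10 : B 1 0 = 675 * B 0 1 := by omega
  have hb11 : B 1 1 = B 0 0 := by omega
  rw [Matrix.det_fin_two, hb10, hb11] at hdet
  refine ⟨B 0 0, B 0 1, ?_, hαv⟩
  rcases hdet with h | h
  · linear_combination h
  · exfalso
    have hz : ∀ u v : ZMod 3, u * u - v * (675 * v) ≠ -1 := by decide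
    refine hz (B 0 0 : ZMod 3) (B 0 1 : ZMod 3) ?_
    have := congrArg (fun z : ℤ => (z : ZMod 3)) h
    push_cast at this
    linear_combination this

lemma mem_a_decomp {α : ℝ} (hα : α ∈ MultSet ![(1:ℝ), 4*s]) :
    ∃ x y : ℤ, α = x + 4*y*s := by
  obtain ⟨B, -, heq⟩ := hα
  have h0 := heq 0
  simp only [Fin.sum_univ_two, Matrix.cons_val_zero, Matrix.cons_val_one,
    Matrix.head_cons, Fin.isValue] at h0
  exact ⟨B 0 0, B 0 1, by linear_combination h0⟩

lemma sol_form {x y : ℤ} (h : x^2 - 675*y^2 = 1) :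
    ∃ ε : ℝ, (ε = 1 ∨ ε = -1) ∧ ∃ k : ℤ, (x:ℝ) + 15*y*s = ε * (2+s)^(3*k) := by
  have hnat : x.natAbs * x.natAbs - 675 * y.natAbs * y.natAbs = 1 := by
    have h1 : ((x.natAbs : ℤ)) * (x.natAbs : ℤ) = x * x := by
      rw [Int.natCast_natAbs]; exact abs_mul_abs_self x
    have h2 : ((y.natAbs : ℤ)) * (y.natAbs : ℤ) = y * y := by
      rw [Int.natCast_natAbs]; exact abs_mul_abs_self y
    have key : x.natAbs * x.natAbs = 675 * y.natAbs * y.natAbs + 1 := by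
      have hz : ((x.natAbs : ℤ)) * (x.natAbs : ℤ)
          = 675 * (y.natAbs : ℤ) * (y.natAbs : ℤ) + 1 := by
        linear_combination h + h1 - 675 * h2
      exact_mod_cast hz
    omega
  obtain ⟨n, hxn, hyn⟩ := Pell.eq_pell h26 hnat
  have hX : ((x.natAbs : ℤ) : ℝ) = (Pell.xn h26 n : ℝ) := by rw [hxn]; push_cast; ring
  have hY : ((y.natAbs : ℤ) : ℝ) = (Pell.yn h26 n : ℝ) := by rw [hyn]; push_cast; ring
  rcases le_or_gt 0 x with hx | hx <;> rcases le_or_gt 0 y with hy | hy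
  · have hx' : (x:ℝ) = (Pell.xn h26 n : ℝ) := by
      rw [← hX, Int.natAbs_of_nonneg hx]
    have hy' : (y:ℝ) = (Pell.yn h26 n : ℝ) := by
      rw [← hY, Int.natAbs_of_nonneg hy]
    exact ⟨1, Or.inl rfl, n, by rw [one_mul, zpow_pos_eq]; linear_combination hx' + 15*s*hy'⟩
  · have hx' : (x:ℝ) = (Pell.xn h26 n : ℝ) := by
      rw [← hX, Int.natAbs_of_nonneg hx]
    have hy' : (y:ℝ) = -(Pell.yn h26 n : ℝ) := by
      rw [← hY, Int.ofNat_natAbs_of_nonpos hy.le]; push_cast; ring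
    exact ⟨1, Or.inl rfl, -(n:ℤ), by rw [one_mul, zpow_neg_eq]; linear_combination hx' + 15*s*hy'⟩
  · have hx' : (x:ℝ) = -(Pell.xn h26 n : ℝ) := by
      rw [← hX, Int.ofNat_natAbs_of_nonpos hx.le]; push_cast; ring
    have hy' : (y:ℝ) = (Pell.yn h26 n : ℝ) := by
      rw [← hY, Int.natAbs_of_nonneg hy]
    refine ⟨-1, Or.inr rfl, -(n:ℤ), ?_⟩
    rw [zpow_neg_eq]; linear_combination hx' + 15*s*hy'
  · have hx' : (x:ℝ) = -(Pell.xn h26 n : ℝ) := by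
      rw [← hX, Int.ofNat_natAbs_of_nonpos hx.le]; push_cast; ring
    have hy' : (y:ℝ) = -(Pell.yn h26 n : ℝ) := by
      rw [← hY, Int.ofNat_natAbs_of_nonpos hy.le]; push_cast; ring
    refine ⟨-1, Or.inr rfl, (n:ℤ), ?_⟩
    rw [zpow_pos_eq]; linear_combination hx' + 15*s*hy'

lemma form_sol (ε : ℝ) (hε : ε = 1 ∨ ε = -1) (k : ℤ) :
    ∃ x y : ℤ, x^2 - 675*y^2 = 1 ∧ ε * (2+s)^(3*k) = (x:ℝ) + 15*(y:ℝ)*s := by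
  obtain ⟨n, rfl | rfl⟩ := Int.eq_nat_or_neg k <;> rcases hε with rfl | rfl
  · exact ⟨Pell.xn h26 n, Pell.yn h26 n, pell_sq n,
      by rw [one_mul, zpow_pos_eq]; push_cast; ring⟩
  · exact ⟨-(Pell.xn h26 n), -(Pell.yn h26 n), by linear_combination pell_sq n,
      by rw [zpow_pos_eq]; push_cast; ring⟩
  · exact ⟨Pell.xn h26 n, -(Pell.yn h26 n), by linear_combination pell_sq n,
      by rw [one_mul, zpow_neg_eq]; push_cast; ring⟩
  · exact ⟨-(Pell.xn h26 n), Pell.yn h26 n, by linear_combination pell_sq n,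
      by rw [zpow_neg_eq]; push_cast; ring⟩

end SemiconjAux

open SemiconjAux

/-- the counterexample to the uncorrected semiconjugacy theorem:
with `a = (1, 4√3)` and `d = (4, 60√3) = C · a` for `C = [[4,0],[0,15]]`,
`(2+√3)³ ∈ M(d)` (witnessed by `[[26,1],[675,26]]` of determinant `1`),
neither `2+√3` nor `(2+√3)²` is in `M(d)`,
`M(d) = {±(2+√3)^(3k) : k ∈ ℤ}`, `(2+√3)³ ∉ M(a)`, and `M(d) ⊄ M(a)`. -/
theorem semiconjugacy_counterexample
    (a d : Fin 2 → ℝ) (hA : a = ![(1 : ℝ), 4 * Real.sqrt 3])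
    (hD : d = ![(4 : ℝ), 60 * Real.sqrt 3])
    (C : Matrix (Fin 2) (Fin 2) ℤ) (hC : C = !![4, 0; 0, 15]) :
    C.det ≠ 0 ∧ (∀ i, d i = ∑ j, (C i j : ℝ) * a j) ∧
    ((!![26, 1; 675, 26] : Matrix (Fin 2) (Fin 2) ℤ).det = 1 ∧
      ∀ i, (2 + Real.sqrt 3) ^ 3 * d i
        = ∑ j, ((!![26, 1; 675, 26] : Matrix (Fin 2) (Fin 2) ℤ) i j : ℝ) * d j) ∧
    (2 + Real.sqrt 3) ^ 3 ∈ MultSet d ∧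
    (2 + Real.sqrt 3) ∉ MultSet d ∧
    (2 + Real.sqrt 3) ^ 2 ∉ MultSet d ∧
    MultSet d = {x : ℝ | ∃ ε : ℝ, (ε = 1 ∨ ε = -1) ∧
        ∃ k : ℤ, x = ε * (2 + Real.sqrt 3) ^ (3 * k)} ∧
    (2 + Real.sqrt 3) ^ 3 ∉ MultSet a ∧
    ¬ MultSet d ⊆ MultSet a := by
  subst hA hD hC
  have hs3 : Real.sqrt 3 ^ 2 = 3 := Real.sq_sqrt (by norm_num)
  have hcube : (2 + Real.sqrt 3) ^ 3 = 26 + 15 * Real.sqrt 3 := by linear_combination (6 + Real.sqrt 3) * hs3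
  have hsq : (2 + Real.sqrt 3) ^ 2 = 7 + 4 * Real.sqrt 3 := by linear_combination hs3
  -- part 4: (2+Real.sqrt 3)^3 ∈ MultSet d
  have h4 : (2 + Real.sqrt 3) ^ 3 ∈ MultSet ![(4:ℝ), 60 * Real.sqrt 3] := by
    have h := mem_d 26 1 (by norm_num)
    rwa [show ((26:ℤ):ℝ) + 15*((1:ℤ):ℝ)*Real.sqrt 3 = (2+Real.sqrt 3)^3 by push_cast; linear_combination (-6 - Real.sqrt 3) * hs3] at h
  -- part 8 : (2+Real.sqrt 3)^3 ∉ MultSet a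
  have h8 : (2 + Real.sqrt 3) ^ 3 ∉ MultSet ![(1:ℝ), 4 * Real.sqrt 3] := by
    intro hm
    obtain ⟨x, y, hxy⟩ := mem_a_decomp hm
    rw [hcube] at hxy
    have key : ((26:ℤ):ℝ) + (15:ℤ) * Real.sqrt 3 = (x:ℝ) + (4*y:ℤ) * Real.sqrt 3 := by
      push_cast; linear_combination hxy
    obtain ⟨-, e2⟩ := coeff_unique key
    omega
  refine ⟨?_, ?_, ⟨?_, ?_⟩, h4, ?_, ?_, ?_, h8, fun hsub => h8 (hsub h4)⟩
  · rw [Matrix.det_fin_two_of]; norm_num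
  · intro i
    fin_cases i
    · show (4:ℝ)
        = ∑ j, ((!![4, 0; 0, 15] : Matrix (Fin 2) (Fin 2) ℤ) 0 j : ℝ) * ![(1:ℝ), 4 * Real.sqrt 3] j
      rw [Fin.sum_univ_two]
      norm_num
    · show (60 * Real.sqrt 3 : ℝ)
        = ∑ j, ((!![4, 0; 0, 15] : Matrix (Fin 2) (Fin 2) ℤ) 1 j : ℝ) * ![(1:ℝ), 4 * Real.sqrt 3] j
      rw [Fin.sum_univ_two]
      norm_num
      ring
  · rw [Matrix.det_fin_two_of]; norm_num
  · intro i
    fin_cases i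
    · show (2 + Real.sqrt 3) ^ 3 * 4
        = ∑ j, ((!![26, 1; 675, 26] : Matrix (Fin 2) (Fin 2) ℤ) 0 j : ℝ) * ![(4:ℝ), 60 * Real.sqrt 3] j
      rw [Fin.sum_univ_two, hcube]
      norm_num
      ring
    · show (2 + Real.sqrt 3) ^ 3 * (60 * Real.sqrt 3)
        = ∑ j, ((!![26, 1; 675, 26] : Matrix (Fin 2) (Fin 2) ℤ) 1 j : ℝ) * ![(4:ℝ), 60 * Real.sqrt 3] j
      rw [Fin.sum_univ_two, hcube]
      norm_num
      linear_combination 900 * hs3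
  · intro hm
    obtain ⟨x, y, -, hxy⟩ := mem_d_decomp hm
    have key : ((2:ℤ):ℝ) + (1:ℤ) * Real.sqrt 3 = (x:ℝ) + (15*y:ℤ) * Real.sqrt 3 := by
      push_cast; linear_combination hxy
    obtain ⟨-, e2⟩ := coeff_unique key
    omega
  · intro hm
    obtain ⟨x, y, -, hxy⟩ := mem_d_decomp hm
    rw [hsq] at hxy
    have key : ((7:ℤ):ℝ) + (4:ℤ) * Real.sqrt 3 = (x:ℝ) + (15*y:ℤ) * Real.sqrt 3 := by
      push_cast; linear_combination hxy
    obtain ⟨-, e2⟩ := coeff_unique key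
    omega
  · ext α
    constructor
    · intro hm
      obtain ⟨x, y, hsol, hxy⟩ := mem_d_decomp hm
      obtain ⟨ε, hε, k, hk⟩ := sol_form hsol
      exact ⟨ε, hε, k, by rw [hxy, hk]⟩
    · rintro ⟨ε, hε, k, rfl⟩
      obtain ⟨x, y, hsol, hval⟩ := form_sol ε hε k
      rw [hval]
      exact mem_d x y hsol
end
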